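/- arXiv:2408.14246 — 7 statements merged into one kernel-verified Lean document; each statement's English description precedes it below -/
import Mathlib

section
/- For c ∈ ℝ, the radial function w_c(x) = (q/b) ln( q m^{1/q} / (b a^{1/q} |x| + q m^{1/q} e^{-bc/q}) ) satisfies a e^{b w_c} = m |∇w_c|^q in ℝ² \ {0}, and w_c(0) = c (extended by continuity). -/
open Real

lemma norm_hasGradientAt {F : Type*} [NormedAddCommGroup F] [InnerProductSpace ℝ F] [CompleteSpace F]
    {x : F} (hx : x ≠ 0) : HasGradientAt (fun y => ‖y‖) (‖x‖⁻¹ • x) x := by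
  have hnx : (0:ℝ) < ‖x‖ := norm_pos_iff.2 hx
  rw [hasGradientAt_iff_hasFDerivAt]
  have h1 : HasFDerivAt (fun y : F => ‖y‖ ^ 2) (2 • (innerSL ℝ x)) x :=
    (hasStrictFDerivAt_norm_sq x).hasFDerivAt
  have h2 : HasDerivAt Real.sqrt (1 / (2 * Real.sqrt (‖x‖ ^ 2))) (‖x‖ ^ 2) :=
    Real.hasDerivAt_sqrt (by positivity)
  have h3 := h2.comp_hasFDerivAt x h1
  have heq : Real.sqrt ∘ (fun y : F => ‖y‖ ^ 2) = fun y : F => ‖y‖ := by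
    funext y; simp [Function.comp, Real.sqrt_sq (norm_nonneg y)]
  rw [heq] at h3
  convert h3 using 1
  · rfl
  ext y
  simp only [ContinuousLinearMap.coe_smul', Pi.smul_apply, innerSL_apply_apply,
    Real.sqrt_sq (norm_nonneg x)]
  rw [InnerProductSpace.toDual_apply_apply]
  simp only [smul_smul, real_inner_smul_left, smul_eq_mul]
  ring

/-- For `c ∈ ℝ`, the radial function
`w_c(x) = (q/b) ln(q m^{1/q} / (b a^{1/q}|x| + q m^{1/q} e^{-bc/q}))`
satisfies `a e^{b w_c} = m |∇ w_c|^q` in `ℝ² \ {0}` and `w_c(0) = c`. -/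
theorem stmt1 (m a b q c : ℝ) (hm : 0 < m) (ha : 0 < a) (hb : 0 < b) (hq : 2 < q)
    (w : EuclideanSpace ℝ (Fin 2) → ℝ)
    (hw : ∀ x, w x = (q / b) *
      Real.log (q * m ^ (1 / q) /
        (b * a ^ (1 / q) * ‖x‖ + q * m ^ (1 / q) * Real.exp (-(b * c) / q)))) :
    (∀ x : EuclideanSpace ℝ (Fin 2), x ≠ 0 →
      a * Real.exp (b * w x) = m * ‖gradient w x‖ ^ q) ∧ w 0 = c := by
  have hq0 : (0:ℝ) < q := by linarith
  set A1 : ℝ := a ^ (1/q) with hA1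
  set M1 : ℝ := m ^ (1/q) with hM1
  have hA1p : 0 < A1 := Real.rpow_pos_of_pos ha _
  have hM1p : 0 < M1 := Real.rpow_pos_of_pos hm _
  set K : ℝ := q * M1 * Real.exp (-(b * c) / q) with hK
  have hKp : 0 < K := by positivity
  set B : ℝ := b * A1 with hB
  have hBp : 0 < B := by positivity
  set N : ℝ := q * M1 with hN
  have hNp : 0 < N := by positivity
  constructor
  · intro x hx
    have hnx : (0:ℝ) < ‖x‖ := norm_pos_iff.2 hx
    set D : ℝ := B * ‖x‖ + K with hD
    have hDp : 0 < D := by positivity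
    -- the 1-D profile
    have hφ : ∀ r : ℝ, 0 < B * r + K →
        HasDerivAt (fun r : ℝ => (q / b) * Real.log (N / (B * r + K)))
          ((q / b) * (-(B / (B * r + K)))) r := by
      intro r hr
      have h1 : HasDerivAt (fun r : ℝ => B * r + K) B r := by
        simpa using ((hasDerivAt_id r).const_mul B).add_const K
      have h2 : HasDerivAt (fun r : ℝ => Real.log (B * r + K)) ((B * r + K)⁻¹ * B) r :=
        by have := (Real.hasDerivAt_log hr.ne').comp r h1; exact this
      have h3 : HasDerivAt (fun r : ℝ => (q / b) * (Real.log N - Real.log (B * r + K)))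
          ((q / b) * (-(B / (B * r + K)))) r := by
        have := ((hasDerivAt_const r (Real.log N)).sub h2).const_mul (q / b)
        convert this using 1
        · rfl
        · rfl
        · rfl
        field_simp
        ring
      have hcont : ContinuousAt (fun s : ℝ => B * s + K) r := by fun_prop
      have hev : (fun r : ℝ => (q / b) * Real.log (N / (B * r + K)))
          =ᶠ[nhds r] (fun r : ℝ => (q / b) * (Real.log N - Real.log (B * r + K))) := by
        filter_upwards [hcont (Ioi_mem_nhds hr)] with s hs
        rw [Real.log_div hNp.ne' (ne_of_gt hs)]
      exact h3.congr_of_eventuallyEq hev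
    -- gradient of w at x
    have hwfun : w = fun y => (q / b) * Real.log (N / (B * ‖y‖ + K)) := by
      funext y; rw [hw y]
    have hgrad : HasGradientAt w
        (((q / b) * (-(B / D)) * ‖x‖⁻¹) • x) x := by
      rw [hasGradientAt_iff_hasFDerivAt, hwfun]
      have h1 := (norm_hasGradientAt hx)
      rw [hasGradientAt_iff_hasFDerivAt] at h1
      have h2 := (hφ ‖x‖ hDp).comp_hasFDerivAt x h1
      convert h2 using 1
      · rfl
      · rfl
      rw [map_smul, map_smul, smul_smul]
      try congr 1
      try rw [hD]
      try ring
    have hg := hgrad.gradient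
    rw [hg]
    have hnorm : ‖((q / b) * (-(B / D)) * ‖x‖⁻¹) • x‖ = q * A1 / D := by
      rw [norm_smul, Real.norm_eq_abs, abs_mul, abs_mul, abs_neg,
        abs_of_pos (div_pos hq0 hb), abs_of_pos (div_pos hBp hDp),
        abs_of_pos (inv_pos.2 hnx)]
      rw [hB]
      field_simp
    rw [hnorm, hw x]
    have hND : 0 < N / D := by positivity
    have hexp : Real.exp (b * ((q / b) * Real.log (N / D))) = (N / D) ^ q := by
      rw [Real.rpow_def_of_pos hND]
      congr 1
      field_simp
    have hstep : b * a ^ (1/q) * ‖x‖ + q * m ^ (1/q) * Real.exp (-(b * c) / q) = D := rfl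
    rw [hstep, hexp]
    have hMq : M1 ^ q = m := by
      rw [hM1, ← Real.rpow_mul hm.le, one_div, inv_mul_cancel₀ hq0.ne', Real.rpow_one]
    have hAq : A1 ^ q = a := by
      rw [hA1, ← Real.rpow_mul ha.le, one_div, inv_mul_cancel₀ hq0.ne', Real.rpow_one]
    have h2 : (N / D) ^ q = q ^ q * m / D ^ q := by
      rw [Real.div_rpow hNp.le hDp.le, hN, Real.mul_rpow hq0.le hM1p.le, hMq]
    have h3 : (q * A1 / D) ^ q = q ^ q * a / D ^ q := by
      rw [Real.div_rpow (by positivity) hDp.le, Real.mul_rpow hq0.le hA1p.le, hAq]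
    rw [h2, h3]
    ring
  · rw [hw 0]
    simp only [norm_zero, mul_zero, zero_add]
    have hMp : (0:ℝ) < m ^ (1/q) := Real.rpow_pos_of_pos hm _
    have h1 : q * m ^ (1/q) / (q * m ^ (1/q) * Real.exp (-(b * c) / q))
        = Real.exp (b * c / q) := by
      rw [div_mul_eq_div_div, div_self (by positivity), one_div, ← Real.exp_neg,
        neg_div, neg_neg]
    rw [h1, Real.log_exp]
    field_simp
end

section
/- For κ ∈ ℝ, the radial function ψ_κ(r) = (2/b)(ln(1/r) - ln(1 - ln r)) + κ on the punctured unit disk of ℝ² satisfies -Δψ_κ + a e^{bψ_κ} = (a e^{bκ} - 2/b) · 1/(|x|²(1-ln|x|)²) pointwise on B₁ \ {0}. -/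
open Real

lemma lemA (b κ : ℝ) (hb : b ≠ 0) {t : ℝ} (h0 : 0 < t) (h1 : t < 1) :
    HasDerivAt (fun t => (2 / b) * (-((1/2) * Real.log t) - Real.log (1 - (1/2) * Real.log t)) + κ)
      (Real.log t / (b * t * (2 - Real.log t))) t := by
  have hlt : Real.log t < 0 := Real.log_neg h0 h1
  have hu : (1 : ℝ) - (1/2) * Real.log t ≠ 0 := by nlinarith
  have H1 : HasDerivAt Real.log t⁻¹ t := Real.hasDerivAt_log h0.ne'
  have H2 : HasDerivAt (fun t => 1 - (1/2) * Real.log t) (-((1/2) * t⁻¹)) t := by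
    simpa using (H1.const_mul (1/2 : ℝ)).const_sub 1
  have H3 := H2.log hu
  have h2 : (2:ℝ) - Real.log t ≠ 0 := by linarith
  have H4 := (((H1.const_mul (1/2 : ℝ)).fun_neg.fun_sub H3).const_mul (2/b)).add_const κ
  convert H4 using 1
  · rfl
  · rfl
  field_simp
  ring

lemma lemB (b : ℝ) (hb : b ≠ 0) {t : ℝ} (h0 : 0 < t) (h1 : t < 1) :
    HasDerivAt (fun t => Real.log t / (b * t * (2 - Real.log t)))
      ((2 - 2 * Real.log t + (Real.log t)^2) / (b * t^2 * (2 - Real.log t)^2)) t := by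
  have hlt : Real.log t < 0 := Real.log_neg h0 h1
  have h2 : (2:ℝ) - Real.log t ≠ 0 := by linarith
  have H1 : HasDerivAt Real.log t⁻¹ t := Real.hasDerivAt_log h0.ne'
  have Hg : HasDerivAt (fun t => b * t * (2 - Real.log t))
      (b * 1 * (2 - Real.log t) + b * t * (0 - t⁻¹)) t := by
    simpa using ((hasDerivAt_id t).const_mul b).fun_mul ((hasDerivAt_const t 2).fun_sub H1)
  have H := H1.fun_div Hg (by
    intro h
    apply h0.ne'
    rcases mul_eq_zero.mp h with h' | h'
    · rcases mul_eq_zero.mp h' with h'' | h''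
      · exact absurd h'' hb
      · exact h''
    · exact absurd h' h2)
  convert H using 1
  · rfl
  · rfl
  field_simp
  ring

/-- Laplacian of a function on `ℝⁿ` as the sum of pure second derivatives. -/
noncomputable def laplacian {n : ℕ} (u : EuclideanSpace ℝ (Fin n) → ℝ)
    (x : EuclideanSpace ℝ (Fin n)) : ℝ :=
  ∑ i : Fin n, iteratedFDeriv ℝ 2 u x ![EuclideanSpace.single i 1, EuclideanSpace.single i 1]

/-- For `κ ∈ ℝ`, the radial function `ψ_κ(r) = (2/b)(ln(1/r) - ln(1 - ln r)) + κ` on the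
punctured unit disk of `ℝ²` satisfies
`-Δψ_κ + a e^{bψ_κ} = (a e^{bκ} - 2/b) / (|x|²(1-ln|x|)²)` pointwise on `B₁ \ {0}`. -/
theorem stmt3 (a b κ : ℝ) (ha : 0 < a) (hb : 0 < b)
    (ψ : EuclideanSpace ℝ (Fin 2) → ℝ)
    (hψ : ∀ x, ψ x = (2 / b) * (Real.log (1 / ‖x‖) - Real.log (1 - Real.log ‖x‖)) + κ) :
    ∀ x : EuclideanSpace ℝ (Fin 2), 0 < ‖x‖ → ‖x‖ < 1 →
      -(laplacian ψ x) + a * Real.exp (b * ψ x) =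
        (a * Real.exp (b * κ) - 2 / b) * (1 / (‖x‖ ^ 2 * (1 - Real.log ‖x‖) ^ 2)) := by
  intro x hr0 hr1
  have hb' : b ≠ 0 := ne_of_gt hb
  have hl : Real.log ‖x‖ < 0 := Real.log_neg hr0 hr1
  have hT : (0:ℝ) < 1 - Real.log ‖x‖ := by linarith
  have hψφ : ψ = fun y => (2 / b) * (-((1/2) * Real.log (‖y‖^2)) -
      Real.log (1 - (1/2) * Real.log (‖y‖^2))) + κ := by
    funext y
    rw [hψ y, Real.log_pow, one_div, Real.log_inv]
    push_cast
    have h1 : (1/2 : ℝ) * (2 * Real.log ‖y‖) = Real.log ‖y‖ := by ring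
    rw [h1]
  have hqD : ∀ y : EuclideanSpace ℝ (Fin 2),
      HasFDerivAt (fun z : EuclideanSpace ℝ (Fin 2) => ‖z‖^2)
        ((fderivInnerCLM ℝ (y, y)).comp
          ((ContinuousLinearMap.id ℝ (EuclideanSpace ℝ (Fin 2))).prod
            (ContinuousLinearMap.id ℝ (EuclideanSpace ℝ (Fin 2))))) y := by
    intro y
    have h := (hasFDerivAt_id y).inner ℝ (hasFDerivAt_id y)
    have he : (fun z : EuclideanSpace ℝ (Fin 2) => ‖z‖^2)
        = fun z : EuclideanSpace ℝ (Fin 2) => (inner ℝ z z : ℝ) := by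
      funext z; exact (real_inner_self_eq_norm_sq z).symm
    rw [he]
    exact h
  have hψD : ∀ y : EuclideanSpace ℝ (Fin 2), 0 < ‖y‖ → ‖y‖ < 1 →
      HasFDerivAt ψ ((Real.log (‖y‖^2) / (b * ‖y‖^2 * (2 - Real.log (‖y‖^2)))) •
        ((fderivInnerCLM ℝ (y, y)).comp
          ((ContinuousLinearMap.id ℝ (EuclideanSpace ℝ (Fin 2))).prod
            (ContinuousLinearMap.id ℝ (EuclideanSpace ℝ (Fin 2)))))) y := by
    intro y hy0 hy1
    rw [hψφ]
    have hs0 : (0:ℝ) < ‖y‖^2 := by positivity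
    have hs1 : ‖y‖^2 < 1 := by nlinarith
    have := (lemA b κ hb' hs0 hs1).comp_hasFDerivAt y (hqD y)
    simpa [Function.comp_def] using this
  have hxU : ∀ᶠ y in nhds x, 0 < ‖y‖ ∧ ‖y‖ < 1 := by
    have hopen : IsOpen {y : EuclideanSpace ℝ (Fin 2) | 0 < ‖y‖ ∧ ‖y‖ < 1} := by
      have hset : {y : EuclideanSpace ℝ (Fin 2) | 0 < ‖y‖ ∧ ‖y‖ < 1}
          = (fun y : EuclideanSpace ℝ (Fin 2) => ‖y‖) ⁻¹' (Set.Ioo 0 1) := rfl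
      rw [hset]
      exact isOpen_Ioo.preimage continuous_norm
    exact hopen.eventually_mem ⟨hr0, hr1⟩
  have hs0 : (0:ℝ) < ‖x‖^2 := by positivity
  have hs1 : ‖x‖^2 < 1 := by nlinarith
  have hlog2 : Real.log (‖x‖^2) < 0 := Real.log_neg hs0 hs1
  have hu : (1:ℝ) - (1/2) * Real.log (‖x‖^2) ≠ 0 := by nlinarith
  have hC : ContDiffAt ℝ 2 ψ x := by
    rw [hψφ]
    have hq : ContDiffAt ℝ 2 (fun z : EuclideanSpace ℝ (Fin 2) => ‖z‖^2) x :=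
      (contDiff_norm_sq ℝ).contDiffAt
    have hlog : ContDiffAt ℝ 2 Real.log (‖x‖^2) := Real.contDiffAt_log.2 hs0.ne'
    have hmain : ContDiffAt ℝ 2 (fun t => (2 / b) * (-((1/2) * Real.log t)
        - Real.log (1 - (1/2) * Real.log t)) + κ) (‖x‖^2) :=
      (contDiffAt_const.mul (((contDiffAt_const.mul hlog).neg).sub
        ((contDiffAt_const.sub (contDiffAt_const.mul hlog)).log hu))).add contDiffAt_const
    exact hmain.comp x hq
  have hdifffd : DifferentiableAt ℝ (fderiv ℝ ψ) x := by
    have h := hC.fderiv_right (m := 1) (by norm_num)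
    exact h.differentiableAt one_ne_zero
  have key : ∀ i : Fin 2,
      (fderiv ℝ (fderiv ℝ ψ) x) (EuclideanSpace.single i 1) (EuclideanSpace.single i 1)
        = 2 * (Real.log (‖x‖^2) / (b * ‖x‖^2 * (2 - Real.log (‖x‖^2))))
          + 4 * ((2 - 2*Real.log (‖x‖^2) + (Real.log (‖x‖^2))^2)
            / (b * (‖x‖^2)^2 * (2 - Real.log (‖x‖^2))^2)) * (x i)^2 := by
    intro i
    set e : EuclideanSpace ℝ (Fin 2) := EuclideanSpace.single i (1:ℝ) with he
    have h1 : (fderiv ℝ (fderiv ℝ ψ) x) e e = fderiv ℝ (fun y => fderiv ℝ ψ y e) x e := by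
      rw [fderiv_clm_apply hdifffd (differentiableAt_const e)]
      simp
    have heq : (fun y => fderiv ℝ ψ y e) =ᶠ[nhds x]
        (fun y => (Real.log (‖y‖^2) / (b * ‖y‖^2 * (2 - Real.log (‖y‖^2))))
          * ((inner ℝ y e : ℝ) + (inner ℝ e y : ℝ))) := by
      filter_upwards [hxU] with y hy
      rw [(hψD y hy.1 hy.2).fderiv]
      simp
    have hmulL : HasFDerivAt
        (fun y : EuclideanSpace ℝ (Fin 2) =>
          Real.log (‖y‖^2) / (b * ‖y‖^2 * (2 - Real.log (‖y‖^2))))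
        (((2 - 2*Real.log (‖x‖^2) + (Real.log (‖x‖^2))^2)
            / (b * (‖x‖^2)^2 * (2 - Real.log (‖x‖^2))^2)) •
          ((fderivInnerCLM ℝ (x, x)).comp
            ((ContinuousLinearMap.id ℝ (EuclideanSpace ℝ (Fin 2))).prod
              (ContinuousLinearMap.id ℝ (EuclideanSpace ℝ (Fin 2)))))) x := by
      have := (lemB b hb' hs0 hs1).comp_hasFDerivAt x (hqD x)
      simpa [Function.comp_def] using this
    have hinnR : HasFDerivAt (fun y : EuclideanSpace ℝ (Fin 2) => (inner ℝ y e : ℝ))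
        ((fderivInnerCLM ℝ (x, e)).comp
          ((ContinuousLinearMap.id ℝ (EuclideanSpace ℝ (Fin 2))).prod 0)) x :=
      (hasFDerivAt_id x).inner ℝ (hasFDerivAt_const e x)
    have hinnL : HasFDerivAt (fun y : EuclideanSpace ℝ (Fin 2) => (inner ℝ e y : ℝ))
        ((fderivInnerCLM ℝ (e, x)).comp
          ((0 : EuclideanSpace ℝ (Fin 2) →L[ℝ] EuclideanSpace ℝ (Fin 2)).prod
            (ContinuousLinearMap.id ℝ (EuclideanSpace ℝ (Fin 2))))) x :=
      (hasFDerivAt_const e x).inner ℝ (hasFDerivAt_id x)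
    have hG := hmulL.mul (hinnR.add hinnL)
    have h2 : fderiv ℝ (fun y => fderiv ℝ ψ y e) x
        = _ := heq.fderiv_eq.trans hG.fderiv
    rw [h1, h2]
    have hxe : (inner ℝ x e : ℝ) = x i := by
      simp [he, EuclideanSpace.inner_single_right]
    have hex : (inner ℝ e x : ℝ) = x i := by
      simp [he, EuclideanSpace.inner_single_left]
    have hee : (inner ℝ e e : ℝ) = 1 := by
      rw [real_inner_self_eq_norm_sq]
      simp [he]
    simp only [ContinuousLinearMap.add_apply, ContinuousLinearMap.smul_apply,
      ContinuousLinearMap.comp_apply, ContinuousLinearMap.prod_apply,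
      ContinuousLinearMap.coe_id', id_eq, ContinuousLinearMap.zero_apply,
      fderivInnerCLM_apply, smul_eq_mul, Pi.add_apply, hxe, hex, hee]
    simp only [inner_zero_right, inner_zero_left]
    ring
  have hsum : x 0 ^ 2 + x 1 ^ 2 = ‖x‖^2 := by
    rw [← real_inner_self_eq_norm_sq]
    simp only [PiLp.inner_apply, RCLike.inner_apply, Fin.sum_univ_two, conj_trivial]
    ring
  have hlap : laplacian ψ x
      = 4 * (Real.log (‖x‖^2) / (b * ‖x‖^2 * (2 - Real.log (‖x‖^2))))
        + 4 * ((2 - 2*Real.log (‖x‖^2) + (Real.log (‖x‖^2))^2)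
          / (b * (‖x‖^2)^2 * (2 - Real.log (‖x‖^2))^2)) * ‖x‖^2 := by
    unfold laplacian
    rw [Fin.sum_univ_two]
    rw [iteratedFDeriv_two_apply, iteratedFDeriv_two_apply]
    simp only [Matrix.cons_val_zero, Matrix.cons_val_one, Matrix.head_cons]
    rw [key 0, key 1, ← hsum]
    ring
  have hexp : Real.exp (b * ψ x)
      = Real.exp (b*κ) / (‖x‖^2 * (1 - Real.log ‖x‖)^2) := by
    have hpos : (0:ℝ) < Real.exp (b*κ) / (‖x‖^2 * (1 - Real.log ‖x‖)^2) := by positivity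
    have hlogeq : b * ψ x = Real.log (Real.exp (b*κ) / (‖x‖^2 * (1 - Real.log ‖x‖)^2)) := by
      rw [Real.log_div (Real.exp_pos _).ne' (by positivity), Real.log_mul (by positivity) (by positivity),
        Real.log_exp, Real.log_pow, Real.log_pow, hψ x, one_div, Real.log_inv]
      push_cast
      field_simp
      ring
    rw [hlogeq, Real.exp_log hpos]
  rw [hlap, hexp]
  have hlogsq : Real.log (‖x‖^2) = 2 * Real.log ‖x‖ := by
    rw [Real.log_pow]; push_cast; ring
  rw [hlogsq]
  have h2T : (2:ℝ) - 2 * Real.log ‖x‖ ≠ 0 := by linarith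
  field_simp
  ring
end

section
/- Let 1 < q < 2, m > 0, and u : (0,1] → ℝ be a C² decreasing function satisfying -u'' - u'/r - m|u'|^q ≤ 0 on (0,1) with u' < 0. Then the function r ↦ r^{1-q}|u'(r)|^{1-q} + m((q-1)/(2-q)) r^{2-q} is nondecreasing on (0,1). -/
open Real

/-- If `1 < q < 2`, `m > 0` and `u` is a `C²` decreasing function on `(0,1]` with `u' < 0`
satisfying `-u'' - u'/r - m|u'|^q ≤ 0` on `(0,1)`, then
`r ↦ r^{1-q}|u'(r)|^{1-q} + m((q-1)/(2-q)) r^{2-q}` is nondecreasing on `(0,1)`. -/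
theorem stmt6 (m q : ℝ) (hm : 0 < m) (hq1 : 1 < q) (hq2 : q < 2)
    (u : ℝ → ℝ) (hu : ContDiffOn ℝ 2 u (Set.Ioo 0 1))
    (hdec : StrictAntiOn u (Set.Ioc 0 1))
    (hu' : ∀ r ∈ Set.Ioo (0 : ℝ) 1, deriv u r < 0)
    (hineq : ∀ r ∈ Set.Ioo (0 : ℝ) 1,
      -(deriv (deriv u) r) - deriv u r / r - m * |deriv u r| ^ q ≤ 0) :
    MonotoneOn
      (fun r => r ^ (1 - q) * |deriv u r| ^ (1 - q) + m * ((q - 1) / (2 - q)) * r ^ (2 - q))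
      (Set.Ioo (0 : ℝ) 1) := by
  set G : ℝ → ℝ := fun r =>
    r ^ (1 - q) * (-deriv u r) ^ (1 - q) + m * ((q - 1) / (2 - q)) * r ^ (2 - q) with hGdef
  -- differentiability of deriv u
  have hder : DifferentiableOn ℝ (deriv u) (Set.Ioo (0:ℝ) 1) := by
    have h1 : ContDiffOn ℝ 1 (deriv u) (Set.Ioo (0:ℝ) 1) :=
      hu.deriv_of_isOpen isOpen_Ioo (by norm_num)
    exact h1.differentiableOn (by norm_num)
  have hDA : ∀ r ∈ Set.Ioo (0:ℝ) 1, HasDerivAt (deriv u) (deriv (deriv u) r) r := by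
    intro r hr
    exact ((hder r hr).differentiableAt (isOpen_Ioo.mem_nhds hr)).hasDerivAt
  -- explicit derivative of G
  have hkey : ∀ r ∈ Set.Ioo (0:ℝ) 1, HasDerivAt G
      ((1 - q) * r ^ (1 - q - 1) * (-deriv u r) ^ (1 - q)
        + r ^ (1 - q) * ((1 - q) * (-deriv u r) ^ (1 - q - 1) * (-(deriv (deriv u) r)))
        + m * ((q - 1) / (2 - q)) * ((2 - q) * r ^ (2 - q - 1))) r := by
    intro r hr
    have hrpos : (0:ℝ) < r := hr.1
    have hw : (0:ℝ) < -deriv u r := by linarith [hu' r hr]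
    have h1 : HasDerivAt (fun x : ℝ => x ^ (1 - q)) ((1 - q) * r ^ (1 - q - 1)) r :=
      Real.hasDerivAt_rpow_const (Or.inl (ne_of_gt hrpos))
    have h2 : HasDerivAt (fun x => -deriv u x) (-(deriv (deriv u) r)) r := (hDA r hr).neg
    have h2p : HasDerivAt (fun x => (-deriv u x) ^ (1 - q))
        ((1 - q) * (-deriv u r) ^ (1 - q - 1) * (-(deriv (deriv u) r))) r := by
      have := h2.rpow_const (p := 1 - q) (Or.inl (ne_of_gt hw))
      convert this using 1
      ring
    have h3 : HasDerivAt (fun x : ℝ => m * ((q - 1) / (2 - q)) * x ^ (2 - q))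
        (m * ((q - 1) / (2 - q)) * ((2 - q) * r ^ (2 - q - 1))) r :=
      (Real.hasDerivAt_rpow_const (Or.inl (ne_of_gt hrpos))).const_mul _
    exact (h1.mul h2p).add h3
  -- nonnegativity of the derivative
  have hnn : ∀ r ∈ Set.Ioo (0:ℝ) 1,
      0 ≤ (1 - q) * r ^ (1 - q - 1) * (-deriv u r) ^ (1 - q)
        + r ^ (1 - q) * ((1 - q) * (-deriv u r) ^ (1 - q - 1) * (-(deriv (deriv u) r)))
        + m * ((q - 1) / (2 - q)) * ((2 - q) * r ^ (2 - q - 1)) := by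
    intro r hr
    have hrpos : (0:ℝ) < r := hr.1
    have hw : (0:ℝ) < -deriv u r := by linarith [hu' r hr]
    set w : ℝ := -deriv u r with hwdef
    set ddu : ℝ := deriv (deriv u) r with hddudef
    have e1 : (1:ℝ) - q - 1 = -q := by ring
    have e2 : (2:ℝ) - q - 1 = 1 - q := by ring
    rw [e1, e2]
    have hbr : (0:ℝ) < r ^ (-q) := Real.rpow_pos_of_pos hrpos _
    have hbw : (0:ℝ) < w ^ (-q) := Real.rpow_pos_of_pos hw _
    have hwq : (0:ℝ) < w ^ q := Real.rpow_pos_of_pos hw _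
    have hr1q : r ^ (1 - q) = r * r ^ (-q) := by
      rw [show (1:ℝ) - q = 1 + -q by ring, Real.rpow_add hrpos, Real.rpow_one]
    have hw1q : w ^ (1 - q) = w * w ^ (-q) := by
      rw [show (1:ℝ) - q = 1 + -q by ring, Real.rpow_add hw, Real.rpow_one]
    have hbwwq : w ^ (-q) * w ^ q = 1 := by
      rw [← Real.rpow_add hw]; simp
    -- the PDE inequality in terms of w
    have hin : -ddu ≤ m * w ^ q - w / r := by
      have := hineq r hr
      have habs : |deriv u r| = w := by rw [hwdef, abs_of_neg (hu' r hr)]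
      rw [habs] at this
      have : -ddu - (-w) / r - m * w ^ q ≤ 0 := by
        rw [hwdef]; simpa using this
      rw [neg_div] at this
      linarith [this]
    have hin2 : r * (-ddu) ≤ m * w ^ q * r - w := by
      have h := mul_le_mul_of_nonneg_left hin hrpos.le
      have : r * (w / r) = w := by field_simp
      nlinarith [h]
    have hin3 : (w ^ (-q)) * (r * (-ddu)) ≤ (w ^ (-q)) * (m * w ^ q * r - w) :=
      mul_le_mul_of_nonneg_left hin2 hbw.le
    have h2q : (2:ℝ) - q ≠ 0 := by linarith
    have hC : m * ((q - 1) / (2 - q)) * (2 - q) = m * (q - 1) := by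
      field_simp
    have hrhs : w ^ (-q) * (m * w ^ q * r - w) = m * r - w ^ (-q) * w := by
      linear_combination m * r * hbwwq
    have hin4 : w ^ (-q) * (r * -ddu) ≤ m * r - w ^ (-q) * w := hrhs ▸ hin3
    have hfact : (0:ℝ) ≤ (q - 1) * (r ^ (-q)) := mul_nonneg (by linarith) hbr.le
    have e3 : m * ((q - 1) / (2 - q)) * ((2 - q) * (r * r ^ (-q)))
        = m * (q - 1) * (r * r ^ (-q)) := by
      field_simp
    rw [hr1q, hw1q, e3]
    nlinarith [mul_le_mul_of_nonneg_left hin4 hfact]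
  -- monotonicity of G
  have hG : MonotoneOn G (Set.Ioo (0:ℝ) 1) := by
    apply monotoneOn_of_deriv_nonneg (convex_Ioo 0 1)
    · intro r hr
      exact ((hkey r hr).differentiableAt).continuousAt.continuousWithinAt
    · rw [interior_Ioo]
      intro r hr
      exact ((hkey r hr).differentiableAt).differentiableWithinAt
    · rw [interior_Ioo]
      intro r hr
      rw [(hkey r hr).deriv]
      exact hnn r hr
  -- transfer to the original function
  intro a ha b hb hab
  have h := hG ha hb hab
  simp only [hGdef] at h
  simpa only [abs_of_neg (hu' a ha), abs_of_neg (hu' b hb)] using h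
end

section
/- Let 1 < q < 2. If u is a C² radial decreasing solution of -u'' - u'/r + a e^{bu} - m|u'|^q = 0 on (0,1) with u ≥ 0, and if limsup_{r→0} (u(r) + A ln r) < ∞ for every A > 0 fails only when lim_{r→0} r|u'(r)| = ∞, then assuming the a priori bound u(r) ≤ (2/b) ln(1/r) + Λ for some Λ, there exists c = c(m,q) > 0 with |u'(r)| ≤ c/r for all 0 < r ≤ r₀ < 1. -/
open Real

private lemma mono_aux7 {f g : ℝ → ℝ} {s ρ R : ℝ} (hs : 0 < s) (hsρ : s ≤ ρ) (hρR : ρ ≤ R)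
    (hf : ∀ x, 0 < x → x ≤ R → HasDerivAt f (g x) x)
    (hg : ∀ x, 0 < x → x < ρ → 0 ≤ g x) : f s ≤ f ρ := by
  have hmono : MonotoneOn f (Set.Icc s ρ) := by
    apply monotoneOn_of_deriv_nonneg (convex_Icc s ρ)
    · intro x hx
      exact ((hf x (hs.trans_le hx.1) (hx.2.trans hρR)).differentiableAt).continuousAt.continuousWithinAt
    · intro x hx
      rw [interior_Icc] at hx
      exact ((hf x (hs.trans hx.1) (hx.2.le.trans hρR)).differentiableAt).differentiableWithinAt
    · intro x hx
      rw [interior_Icc] at hx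
      rw [(hf x (hs.trans hx.1) (hx.2.le.trans hρR)).deriv]
      exact hg x (hs.trans hx.1) hx.2
  exact hmono (Set.left_mem_Icc.2 hsρ) (Set.right_mem_Icc.2 hsρ) hsρ

set_option maxHeartbeats 2000000 in
/-- Let `1 < q < 2`. If `u ≥ 0` is a `C²` radial decreasing solution of
`-u'' - u'/r + a e^{bu} - m|u'|^q = 0` on `(0,1)` satisfying the a priori bound
`u(r) ≤ (2/b)ln(1/r) + Λ`, then for every `r₀ ∈ (0,1)` there is `c > 0` with
`|u'(r)| ≤ c/r` on `(0,r₀]`. -/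
theorem stmt7 (m a b q Λ : ℝ) (hm : 0 < m) (ha : 0 < a) (hb : 0 < b)
    (hq1 : 1 < q) (hq2 : q < 2)
    (u : ℝ → ℝ) (hu : ContDiffOn ℝ 2 u (Set.Ioo 0 1))
    (hdec : StrictAntiOn u (Set.Ioc 0 1))
    (hpos : ∀ r ∈ Set.Ioc (0 : ℝ) 1, 0 ≤ u r)
    (heq : ∀ r ∈ Set.Ioo (0 : ℝ) 1,
      -(deriv (deriv u) r) - deriv u r / r + a * Real.exp (b * u r) - m * |deriv u r| ^ q = 0)
    (hap : ∀ r ∈ Set.Ioo (0 : ℝ) 1, u r ≤ (2 / b) * Real.log (1 / r) + Λ) :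
    ∀ r₀ ∈ Set.Ioo (0 : ℝ) 1, ∃ c > 0, ∀ r ∈ Set.Ioc (0 : ℝ) r₀, |deriv u r| ≤ c / r := by
  have hopen : IsOpen (Set.Ioo (0:ℝ) 1) := isOpen_Ioo
  have hu1 : ContDiffOn ℝ 1 (deriv u) (Set.Ioo 0 1) :=
    hu.deriv_of_isOpen hopen (by norm_num)
  have hdu : ∀ r ∈ Set.Ioo (0:ℝ) 1, HasDerivAt u (deriv u r) r := fun r hr =>
    ((hu.differentiableOn (by norm_num)).differentiableAt (hopen.mem_nhds hr)).hasDerivAt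
  have hdu2 : ∀ r ∈ Set.Ioo (0:ℝ) 1, HasDerivAt (deriv u) (deriv (deriv u) r) r := fun r hr =>
    ((hu1.differentiableOn (by norm_num)).differentiableAt (hopen.mem_nhds hr)).hasDerivAt
  -- u' ≤ 0
  have hneg : ∀ r ∈ Set.Ioo (0:ℝ) 1, deriv u r ≤ 0 := by
    intro r hr
    have h1 := hasDerivAt_iff_tendsto_slope.mp (hdu r hr)
    have h2 : Filter.Tendsto (slope u r) (nhdsWithin r (Set.Ioi r)) (nhds (deriv u r)) :=
      h1.mono_left (nhdsWithin_mono _ (fun y hy => ne_of_gt hy))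
    refine le_of_tendsto h2 ?_
    filter_upwards [Ioo_mem_nhdsGT_of_mem ⟨le_refl r, hr.2⟩] with y hy
    have hlt : u y < u r := hdec ⟨hr.1, hr.2.le⟩ ⟨hr.1.trans hy.1, hy.2.le⟩ hy.1
    rw [slope_def_field, div_eq_mul_inv]
    apply mul_nonpos_of_nonpos_of_nonneg
    · linarith
    · have : 0 < y - r := by linarith [hy.1]
      positivity
  -- w and its derivative
  set w : ℝ → ℝ := fun s => -(s * deriv u s) with hwdef
  have hw0 : ∀ r ∈ Set.Ioo (0:ℝ) 1, 0 ≤ w r := fun r hr => by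
    simp only [hwdef, neg_nonneg]
    exact mul_nonpos_of_nonneg_of_nonpos hr.1.le (hneg r hr)
  have hwabs : ∀ r ∈ Set.Ioo (0:ℝ) 1, |deriv u r| = w r / r := by
    intro r hr
    rw [abs_of_nonpos (hneg r hr), hwdef]
    field_simp [ne_of_gt hr.1]
  have hwd : ∀ r ∈ Set.Ioo (0:ℝ) 1,
      HasDerivAt w (m * r * |deriv u r| ^ q - a * r * Real.exp (b * u r)) r := by
    intro r hr
    have h := ((hasDerivAt_id r).mul (hdu2 r hr)).neg
    have e := heq r hr
    have hr0 : (r:ℝ) ≠ 0 := ne_of_gt hr.1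
    refine h.congr_deriv ?_
    have hdiv : deriv u r / r * r = deriv u r := div_mul_cancel₀ _ hr0
    simp only [id_eq, one_mul]
    linear_combination r * e + hdiv
  -- growth bound on the source term
  set C : ℝ := a * Real.exp (b * Λ) with hCdef
  have hC0 : 0 < C := by positivity
  have hgb : ∀ r ∈ Set.Ioo (0:ℝ) 1, a * r * Real.exp (b * u r) ≤ C / r := by
    intro r hr
    have h1 : b * u r ≤ 2 * Real.log r⁻¹ + b * Λ := by
      have := hap r hr
      have h2 : b * u r ≤ b * ((2 / b) * Real.log (1/r) + Λ) :=
        mul_le_mul_of_nonneg_left this hb.le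
      rw [one_div] at h2
      calc b * u r ≤ b * ((2 / b) * Real.log r⁻¹ + Λ) := h2
        _ = 2 * Real.log r⁻¹ + b * Λ := by field_simp
    have h3 : Real.exp (b * u r) ≤ r⁻¹ ^ (2:ℕ) * Real.exp (b * Λ) := by
      calc Real.exp (b * u r) ≤ Real.exp (2 * Real.log r⁻¹ + b * Λ) := Real.exp_le_exp.2 h1
        _ = Real.exp (Real.log r⁻¹) ^ (2:ℕ) * Real.exp (b * Λ) := by
            rw [Real.exp_add, ← Real.exp_nat_mul]; norm_num
        _ = r⁻¹ ^ (2:ℕ) * Real.exp (b * Λ) := by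
            rw [Real.exp_log (inv_pos.2 hr.1)]
    have hr0 : (0:ℝ) < r := hr.1
    calc a * r * Real.exp (b * u r) ≤ a * r * (r⁻¹ ^ (2:ℕ) * Real.exp (b * Λ)) := by
          apply mul_le_mul_of_nonneg_left h3 (mul_nonneg ha.le hr0.le)
      _ = C / r := by rw [hCdef]; field_simp
  -- ================= main part =================
  intro r₀ hr₀
  obtain ⟨hr₀0, hr₀1⟩ := hr₀
  -- Step A : logarithmic bound
  have stepA : ∀ s, 0 < s → s ≤ r₀ → w s ≤ w r₀ + C * (Real.log r₀ - Real.log s) := by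
    intro s hs hsr
    have key : w s + C * Real.log s ≤ w r₀ + C * Real.log r₀ := by
      apply mono_aux7 (f := fun x => w x + C * Real.log x) (g := fun x =>
          (m * x * |deriv u x| ^ q - a * x * Real.exp (b * u x)) + C * x⁻¹) hs hsr (le_refl r₀)
      · intro x hx hxR
        exact (hwd x ⟨hx, lt_of_le_of_lt hxR hr₀1⟩).add
          ((Real.hasDerivAt_log (ne_of_gt hx)).const_mul C)
      · intro x hx hxρ
        have hx1 : x ∈ Set.Ioo (0:ℝ) 1 := ⟨hx, hxρ.trans hr₀1⟩
        have h1 := hgb x hx1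
        have h2 : 0 ≤ m * x * |deriv u x| ^ q := by positivity
        have h3 : C / x = C * x⁻¹ := div_eq_mul_inv C x
        linarith [h3 ▸ h1]
    linarith
  -- Step P : power bound
  have h2q : (0:ℝ) < 2 - q := by linarith
  set ε : ℝ := (2 - q) / (2 * q) with hεdef
  have hε : 0 < ε := by rw [hεdef]; positivity
  set κ : ℝ := (2 - q) / 2 with hκdef
  have hκ : 0 < κ := by rw [hκdef]; positivity
  have hwr₀ : 0 ≤ w r₀ := hw0 r₀ ⟨hr₀0, hr₀1⟩
  set Bc : ℝ := w r₀ + C / ε with hBdef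
  have hBc : 0 < Bc := by rw [hBdef]; positivity
  have stepP : ∀ s, 0 < s → s ≤ r₀ → w s ≤ Bc * s⁻¹ ^ ε := by
    intro s hs hsr
    have hs1 : s < 1 := lt_of_le_of_lt hsr hr₀1
    have hinv : (1:ℝ) ≤ s⁻¹ := (one_le_inv₀ hs).2 hs1.le
    have h1 : (1:ℝ) ≤ s⁻¹ ^ ε := Real.one_le_rpow hinv hε.le
    have hlog : Real.log s⁻¹ ≤ ε⁻¹ * s⁻¹ ^ ε := by
      have h2 : Real.log (s⁻¹ ^ ε) = ε * Real.log s⁻¹ := Real.log_rpow (inv_pos.2 hs) ε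
      have h3 : Real.log (s⁻¹ ^ ε) ≤ s⁻¹ ^ ε - 1 :=
        Real.log_le_sub_one_of_pos (by positivity)
      have h4 : ε * Real.log s⁻¹ ≤ s⁻¹ ^ ε - 1 := by rw [← h2]; exact h3
      rw [← mul_le_mul_iff_right₀ hε]
      calc ε * Real.log s⁻¹ ≤ s⁻¹ ^ ε - 1 := h4
        _ ≤ s⁻¹ ^ ε := by linarith
        _ = ε * (ε⁻¹ * s⁻¹ ^ ε) := by field_simp
    have h4 := stepA s hs hsr
    have hlogr₀ : Real.log r₀ ≤ 0 := Real.log_nonpos hr₀0.le hr₀1.le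
    have hlogs : Real.log r₀ - Real.log s ≤ Real.log s⁻¹ := by
      rw [Real.log_inv]; linarith
    have hlogs0 : 0 ≤ Real.log s⁻¹ := Real.log_nonneg hinv
    have hA : C * (Real.log r₀ - Real.log s) ≤ C * (ε⁻¹ * s⁻¹ ^ ε) :=
      mul_le_mul_of_nonneg_left (hlogs.trans hlog) hC0.le
    have hB2 : w r₀ ≤ w r₀ * s⁻¹ ^ ε := le_mul_of_one_le_right hwr₀ h1
    calc w s ≤ w r₀ + C * (Real.log r₀ - Real.log s) := h4
      _ ≤ w r₀ * s⁻¹ ^ ε + C * (ε⁻¹ * s⁻¹ ^ ε) := by linarith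
      _ = Bc * s⁻¹ ^ ε := by rw [hBdef, add_mul, div_eq_mul_inv]; ring
  -- main pointwise bound
  have hmain : ∀ x, 0 < x → x ≤ r₀ → m * x * |deriv u x| ^ q ≤ m * Bc ^ q * x ^ (κ - 1) := by
    intro x hx hxr
    have hx1 : x ∈ Set.Ioo (0:ℝ) 1 := ⟨hx, lt_of_le_of_lt hxr hr₀1⟩
    have e1 : x⁻¹ ^ ε = x ^ (-ε) := by
      rw [Real.inv_rpow hx.le, Real.rpow_neg hx.le]
    have e2 : (x:ℝ)⁻¹ = x ^ (-1:ℝ) := by rw [Real.rpow_neg_one]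
    have hb1 : |deriv u x| ≤ Bc * x ^ (-ε) * x ^ (-1:ℝ) := by
      rw [hwabs x hx1, div_eq_mul_inv, ← e1, e2 ]
      rw [← e2]
      exact mul_le_mul_of_nonneg_right (stepP x hx hxr) (inv_nonneg.2 hx.le)
    have hb2 : |deriv u x| ^ q ≤ (Bc * x ^ (-ε) * x ^ (-1:ℝ)) ^ q :=
      Real.rpow_le_rpow (abs_nonneg _) hb1 (by linarith)
    have hb3 : (Bc * x ^ (-ε) * x ^ (-1:ℝ)) ^ q = Bc ^ q * x ^ ((-ε + -1) * q) := by
      rw [mul_assoc, ← Real.rpow_add hx, Real.mul_rpow hBc.le (Real.rpow_nonneg hx.le _),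
        ← Real.rpow_mul hx.le]
    have hexp : 1 + (-ε + -1) * q = κ - 1 := by
      rw [hεdef, hκdef]; field_simp; ring
    have hb4 : x * x ^ ((-ε + -1) * q) = x ^ (κ - 1) := by
      nth_rewrite 1 [← Real.rpow_one x]
      rw [← Real.rpow_add hx, hexp]
    calc m * x * |deriv u x| ^ q ≤ m * x * (Bc ^ q * x ^ ((-ε + -1) * q)) := by
          rw [← hb3]
          exact mul_le_mul_of_nonneg_left hb2 (by positivity)
      _ = m * Bc ^ q * (x * x ^ ((-ε + -1) * q)) := by ring
      _ = m * Bc ^ q * x ^ (κ - 1) := by rw [hb4]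
  -- Step Z : w x - D x^κ is antitone on (0, r₀]
  set D : ℝ := m * Bc ^ q / κ with hDdef
  have hD0 : 0 ≤ D := by rw [hDdef]; positivity
  have stepZ : ∀ s ρ', 0 < s → s ≤ ρ' → ρ' ≤ r₀ → w ρ' - D * ρ' ^ κ ≤ w s - D * s ^ κ := by
    intro s ρ' hs hsρ hρr
    have key : D * s ^ κ - w s ≤ D * ρ' ^ κ - w ρ' := by
      apply mono_aux7 (f := fun x => D * x ^ κ - w x) (g := fun x => D * (κ * x ^ (κ - 1)) -
          (m * x * |deriv u x| ^ q - a * x * Real.exp (b * u x))) hs hsρ hρr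
      · intro x hx hxR
        exact ((Real.hasDerivAt_rpow_const (Or.inl (ne_of_gt hx))).const_mul D).sub
          (hwd x ⟨hx, lt_of_le_of_lt hxR hr₀1⟩)
      · intro x hx hxρ
        have h1 := hmain x hx (le_of_lt (lt_of_lt_of_le hxρ hρr))
        have h2 : D * (κ * x ^ (κ - 1)) = m * Bc ^ q * x ^ (κ - 1) := by
          rw [hDdef]; field_simp
        have h3 : 0 ≤ a * x * Real.exp (b * u x) := by positivity
        rw [h2]
        linarith
    linarith
  -- conclusion
  refine ⟨2 / b + D + 1, by positivity, ?_⟩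
  intro ρ hρ
  obtain ⟨hρ0, hρr⟩ := hρ
  have hρ1 : ρ < 1 := lt_of_le_of_lt hρr hr₀1
  set μ : ℝ := w ρ - D * ρ ^ κ with hμdef
  have hμle : μ ≤ 2 / b := by
    by_contra hcon
    push_neg at hcon
    set X : ℝ := (2 / b) * Real.log ρ⁻¹ + Λ with hXdef
    have hd : 0 < μ - 2 / b := by linarith
    set t : ℝ := (|X| + 1) / (μ - 2 / b) with htdef
    have ht : 0 < t := by positivity
    set r : ℝ := ρ * Real.exp (-t) with hrdef
    have hr0 : 0 < r := by positivity
    have hrρ : r ≤ ρ := by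
      rw [hrdef]
      have he1 : Real.exp (-t) ≤ 1 := Real.exp_le_one_iff.2 (by linarith)
      nlinarith
    have hr1 : r < 1 := lt_of_le_of_lt hrρ hρ1
    have hkey : -(u r + μ * Real.log r) ≤ -(u ρ + μ * Real.log ρ) := by
      apply mono_aux7 (f := fun x => -(u x + μ * Real.log x))
        (g := fun x => -(deriv u x + μ * x⁻¹)) hr0 hrρ (le_refl ρ)
      · intro x hx hxρ
        exact ((hdu x ⟨hx, lt_of_le_of_lt hxρ hρ1⟩).add
          ((Real.hasDerivAt_log (ne_of_gt hx)).const_mul μ)).neg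
      · intro x hx hxρ
        have hzx := stepZ x ρ hx hxρ.le hρr
        have hxκ : 0 ≤ x ^ κ := Real.rpow_nonneg hx.le κ
        have hwx : μ ≤ w x := by nlinarith [mul_nonneg hD0 hxκ]
        have hrew : deriv u x + μ * x⁻¹ = (μ - w x) / x := by
          rw [show w x = -(x * deriv u x) from rfl]
          field_simp
          ring
        rw [neg_nonneg, hrew]
        exact div_nonpos_of_nonpos_of_nonneg (by linarith) hx.le
    have hlogρ0 : 0 ≤ Real.log ρ⁻¹ := Real.log_nonneg ((one_le_inv₀ hρ0).2 hρ1.le)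
    have hkey2 : u ρ + μ * Real.log ρ ≤ u r + μ * Real.log r := by linarith
    have hlogr : Real.log r = Real.log ρ - t := by
      rw [hrdef, Real.log_mul (ne_of_gt hρ0) (ne_of_gt (Real.exp_pos _)), Real.log_exp]
      ring
    clear_value r t X μ
    have huρ : 0 ≤ u ρ := hpos ρ ⟨hρ0, hρ1.le⟩
    have hua := hap r ⟨hr0, hr1⟩
    have h5 : μ * t ≤ u r := by
      rw [hlogr] at hkey2
      nlinarith
    have h6 : Real.log (1 / r) = t + Real.log ρ⁻¹ := by
      rw [one_div, Real.log_inv, hlogr, Real.log_inv]; ring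
    rw [h6] at hua
    have h7 : (μ - 2 / b) * t = |X| + 1 := by
      rw [htdef, mul_comm, div_mul_cancel₀ _ (ne_of_gt hd)]
    have h8 : μ * t ≤ (2 / b) * t + X := by
      rw [hXdef]; linarith
    have h9 := le_abs_self X
    nlinarith
  have hρκ : ρ ^ κ ≤ 1 := Real.rpow_le_one hρ0.le hρ1.le hκ.le
  have hwρ : w ρ ≤ 2 / b + D := by
    have hμw : w ρ = μ + D * ρ ^ κ := by rw [hμdef]; ring
    nlinarith
  rw [hwabs ρ ⟨hρ0, hρ1⟩]
  exact (div_le_div_iff_of_pos_right hρ0).2 (by linarith)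
end

section
/- Let 1 < q < 2, m, a, b > 0, γ ∈ (0, 2/b]. There exist c, M > 0 such that the radial function ψ(x) = γ ln(1/|x|) + c(1-|x|^{2-q}) + M satisfies -Δψ + a e^{bψ} - m|∇ψ|^q ≥ 0 pointwise in B₁ \ {0} ⊂ ℝ². -/
open Real

lemma radial_fderiv {E : Type*} [NormedAddCommGroup E] [InnerProductSpace ℝ E]
    (g : ℝ → ℝ) (u : ℝ) (x : E) (hu : HasDerivAt g u (‖x‖ ^ 2)) :
    HasFDerivAt (fun y : E => g (‖y‖ ^ 2)) ((2 * u) • innerSL ℝ x) x := by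
  have h1 : HasFDerivAt (fun y : E => ‖y‖ ^ 2) (2 • (innerSL ℝ x)) x :=
    (hasStrictFDerivAt_norm_sq x).hasFDerivAt
  have h2 := hu.comp_hasFDerivAt x h1
  refine HasFDerivAt.congr_fderiv h2 ?_
  ext y
  simp [two_smul, smul_smul]
  ring

private noncomputable def Jmap (E : Type*) [NormedAddCommGroup E] [InnerProductSpace ℝ E] :
    E →L[ℝ] (E →L[ℝ] ℝ) := innerSL ℝ

lemma radial_snd {E : Type*} [NormedAddCommGroup E] [InnerProductSpace ℝ E]
    (g g1 : ℝ → ℝ) (u2 : ℝ) (x : E) (hx : x ≠ 0)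
    (hd : ∀ t : ℝ, 0 < t → HasDerivAt g (g1 t) t)
    (hu2 : HasDerivAt g1 u2 (‖x‖ ^ 2)) (v w : E) :
    fderiv ℝ (fderiv ℝ (fun y : E => g (‖y‖ ^ 2))) x v w
      = (2 * g1 (‖x‖ ^ 2)) * inner ℝ v w + (2 * (2 * u2)) * inner ℝ x v * inner ℝ x w := by
  set F : E → (E →L[ℝ] ℝ) := fun y => (2 * g1 (‖y‖ ^ 2)) • (Jmap E y) with hF
  have hev : fderiv ℝ (fun y : E => g (‖y‖ ^ 2)) =ᶠ[nhds x] F := by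
    filter_upwards [isOpen_compl_singleton.mem_nhds hx] with y hy
    have hy0 : (0:ℝ) < ‖y‖ ^ 2 := pow_pos (norm_pos_iff.mpr hy) 2
    exact (radial_fderiv g (g1 (‖y‖ ^ 2)) y (hd _ hy0)).fderiv
  have hc : HasFDerivAt (fun y : E => 2 * g1 (‖y‖ ^ 2)) ((2 * (2 * u2)) • innerSL ℝ x) x :=
    radial_fderiv (fun t => 2 * g1 t) (2 * u2) x (hu2.const_mul 2)
  have hlin : HasFDerivAt (fun y : E => Jmap E y) (Jmap E) x := (Jmap E).hasFDerivAt
  have hD : HasFDerivAt F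
      ((2 * g1 (‖x‖ ^ 2)) • (Jmap E)
        + ((2 * (2 * u2)) • innerSL ℝ x).smulRight (Jmap E x)) x := hc.smul hlin
  rw [hev.fderiv_eq, hD.fderiv]
  simp [Jmap, innerSL_apply_apply, ContinuousLinearMap.smul_apply, ContinuousLinearMap.add_apply]
  rfl

lemma key (q γ c M : ℝ) (hq1 : 1 < q) (hq2 : q < 2) (hγ : 0 < γ) (hc : 0 < c)
    (ψ : EuclideanSpace ℝ (Fin 2) → ℝ)
    (hψ : ∀ x, ψ x = γ * Real.log (1 / ‖x‖) + c * (1 - ‖x‖ ^ (2 - q)) + M)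
    (x : EuclideanSpace ℝ (Fin 2)) (hx : 0 < ‖x‖) :
    laplacian ψ x = -(c * (2 - q) ^ 2) * ‖x‖ ^ (-q) ∧
      ‖gradient ψ x‖ = γ / ‖x‖ + c * (2 - q) * ‖x‖ ^ (1 - q) := by
  set r := ‖x‖ with hr
  have hx0 : x ≠ 0 := norm_pos_iff.mp hx
  set p : ℝ := 1 - q / 2 with hp
  have hp0 : 0 < p := by rw [hp]; linarith
  set g : ℝ → ℝ := fun t => -(γ/2) * Real.log t + c * (1 - t ^ p) + M with hg
  set g1 : ℝ → ℝ := fun t => -(γ/2) * t⁻¹ - c * p * t ^ (p - 1) with hg1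
  have hs : (0:ℝ) < r ^ 2 := pow_pos hx 2
  set s : ℝ := r ^ 2 with hsdef
  -- ψ = g ∘ ‖·‖²
  have hψg : ψ = fun y => g (‖y‖ ^ 2) := by
    funext y
    rw [hψ y, hg]
    have h1 : Real.log (1 / ‖y‖) = -Real.log ‖y‖ := by rw [one_div, Real.log_inv]
    have h2 : Real.log (‖y‖ ^ 2) = 2 * Real.log ‖y‖ := by
      rw [Real.log_pow]; norm_num
    have h3 : (‖y‖ ^ 2) ^ p = ‖y‖ ^ (2 - q) := by
      rw [← Real.rpow_natCast ‖y‖ 2, ← Real.rpow_mul (norm_nonneg y)]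
      norm_num [hp]; ring_nf
    simp only [h1, h2, h3]
    ring
  -- first derivative of g
  have hd : ∀ t : ℝ, 0 < t → HasDerivAt g (g1 t) t := by
    intro t ht
    have h1 : HasDerivAt (fun t : ℝ => -(γ/2) * Real.log t) (-(γ/2) * t⁻¹) t :=
      (Real.hasDerivAt_log ht.ne').const_mul (-(γ/2))
    have h2 : HasDerivAt (fun t : ℝ => t ^ p) (p * t ^ (p - 1)) t :=
      Real.hasDerivAt_rpow_const (Or.inl ht.ne')
    have h3 : HasDerivAt (fun t : ℝ => c * (1 - t ^ p)) (c * (0 - p * t ^ (p - 1))) t :=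
      ((hasDerivAt_const t (1:ℝ)).sub h2).const_mul c
    have h4 := (h1.add h3).add_const M
    refine HasDerivAt.congr_deriv h4 ?_
    rw [hg1]; ring
  -- second derivative of g at s
  set u2 : ℝ := γ/2 * (s ^ 2)⁻¹ - c * p * (p - 1) * s ^ (p - 2) with hu2def
  have hd2 : HasDerivAt g1 u2 s := by
    have h1 : HasDerivAt (fun t : ℝ => -(γ/2) * t⁻¹) (-(γ/2) * (-(s ^ 2)⁻¹)) s :=
      (hasDerivAt_inv hs.ne').const_mul (-(γ/2))
    have h2 : HasDerivAt (fun t : ℝ => t ^ (p - 1)) ((p - 1) * s ^ (p - 1 - 1)) s :=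
      Real.hasDerivAt_rpow_const (Or.inl hs.ne')
    have h3 := h1.sub ((h2.const_mul (c * p)))
    refine HasDerivAt.congr_deriv h3 ?_
    have e : p - 1 - 1 = p - 2 := by ring
    rw [hu2def, e]; ring
  constructor
  · -- laplacian
    have hlap : ∀ i : Fin 2,
        iteratedFDeriv ℝ 2 ψ x ![EuclideanSpace.single i 1, EuclideanSpace.single i 1]
          = (2 * g1 s) * inner ℝ (EuclideanSpace.single i (1:ℝ)) (EuclideanSpace.single i (1:ℝ))
            + (2 * (2 * u2)) * inner ℝ x (EuclideanSpace.single i (1:ℝ)) * inner ℝ x (EuclideanSpace.single i (1:ℝ)) := by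
      intro i
      rw [iteratedFDeriv_two_apply]
      simp only [Matrix.cons_val_zero, Matrix.cons_val_one, Matrix.head_cons]
      rw [hψg]
      exact radial_snd g g1 u2 x hx0 hd hd2 _ _
    have hsingle : ∀ i : Fin 2,
        (inner ℝ (EuclideanSpace.single i (1:ℝ)) (EuclideanSpace.single i (1:ℝ)) : ℝ) = 1 := by
      intro i
      rw [EuclideanSpace.inner_single_left]
      simp
    have hxi : ∀ i : Fin 2, (inner ℝ x (EuclideanSpace.single i (1:ℝ)) : ℝ) = x i := by
      intro i
      rw [EuclideanSpace.inner_single_right]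
      simp
    have hsum : x 0 * x 0 + x 1 * x 1 = s := by
      rw [hsdef, hr, EuclideanSpace.norm_eq, Real.sq_sqrt (by positivity)]
      simp [Fin.sum_univ_two]
      ring
    rw [laplacian, Fin.sum_univ_two, hlap 0, hlap 1, hsingle, hsingle, hxi, hxi]
    -- now pure algebra
    have e1 : s ^ (p - 2) * s = s ^ (p - 1) := by
      have := Real.rpow_add hs (p - 2) 1
      rw [Real.rpow_one] at this
      rw [← this]; congr 1; ring
    have e2 : s ^ (p - 1) = r ^ (-q) := by
      rw [hsdef, ← Real.rpow_natCast r 2, ← Real.rpow_mul hx.le]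
      norm_num; ring_nf
      congr 1; rw [hp]; ring
    have e3 : s * (s ^ 2)⁻¹ = s⁻¹ := by
      rw [pow_two, mul_inv]
      field_simp
    have hq4 : (2 - q) ^ 2 = 4 * p ^ 2 := by rw [hp]; ring
    rw [← e2]
    simp only [hg1, hu2def]
    linear_combination (2*γ*(s^2)⁻¹ - 4*c*p*(p-1)*s^(p-2)) * hsum + 2*γ*e3
      - 4*c*p*(p-1)*e1 + c*(s^(p-1))*hq4
  · -- gradient
    have h2q : (0:ℝ) < 2 - q := by linarith
    have h2p : 2 * p = 2 - q := by rw [hp]; ring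
    have e2 : s ^ (p - 1) = r ^ (-q) := by
      rw [hsdef, ← Real.rpow_natCast r 2, ← Real.rpow_mul hx.le]
      norm_num; ring_nf
      congr 1; rw [hp]; ring
    have hfd := radial_fderiv g (g1 s) x (hd s hs)
    have hgrad : HasGradientAt ψ ((2 * g1 s) • x) x := by
      rw [hasGradientAt_iff_hasFDerivAt]
      have heq : (InnerProductSpace.toDual ℝ (EuclideanSpace ℝ (Fin 2))) ((2 * g1 s) • x)
          = (2 * g1 s) • innerSL ℝ x := by
        ext y
        simp [InnerProductSpace.toDual_apply_apply, real_inner_smul_left]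
      rw [heq, hψg]
      exact hfd
    rw [hgrad.gradient, norm_smul, Real.norm_eq_abs]
    have hneg : 2 * g1 s = -(γ * s⁻¹ + c * (2 - q) * s ^ (p - 1)) := by
      simp only [hg1]
      linear_combination (-(c * s ^ (p - 1))) * h2p
    have hpos : (0:ℝ) < γ * s⁻¹ + c * (2 - q) * s ^ (p - 1) :=
      add_pos (by positivity) (mul_pos (mul_pos hc h2q) (Real.rpow_pos_of_pos hs _))
    rw [hneg, abs_neg, abs_of_pos hpos]
    have f1 : s⁻¹ * r = r⁻¹ := by
      rw [hsdef, pow_two, mul_inv]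
      field_simp
    have f2 : s ^ (p - 1) * r = r ^ (1 - q) := by
      rw [e2]
      have := Real.rpow_add hx (-q) 1
      rw [Real.rpow_one] at this
      rw [← this]
      congr 1; ring
    rw [← hr]
    linear_combination γ * f1 + c * (2 - q) * f2

/-- For `1 < q < 2`, `m,a,b > 0` and `γ ∈ (0, 2/b]`, there exist `c, M > 0` such that
`ψ(x) = γ ln(1/|x|) + c(1-|x|^{2-q}) + M` is a supersolution:
`-Δψ + a e^{bψ} - m|∇ψ|^q ≥ 0` in `B₁ \ {0} ⊂ ℝ²`. -/
theorem stmt11 (m a b q γ : ℝ) (hm : 0 < m) (ha : 0 < a) (hb : 0 < b)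
    (hq1 : 1 < q) (hq2 : q < 2) (hγ : 0 < γ) (hγ2 : γ ≤ 2 / b) :
    ∃ c > 0, ∃ M > 0, ∀ ψ : EuclideanSpace ℝ (Fin 2) → ℝ,
      (∀ x, ψ x = γ * Real.log (1 / ‖x‖) + c * (1 - ‖x‖ ^ (2 - q)) + M) →
      ∀ x : EuclideanSpace ℝ (Fin 2), 0 < ‖x‖ → ‖x‖ < 1 →
        0 ≤ -(laplacian ψ x) + a * Real.exp (b * ψ x) - m * ‖gradient ψ x‖ ^ q := by
  have h2q : (0:ℝ) < 2 - q := by linarith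
  obtain ⟨c, hcdef⟩ : ∃ c : ℝ, c = m * (γ + 1) ^ q / (2 - q) ^ 2 + 1 := ⟨_, rfl⟩
  have hc : 0 < c := by
    rw [hcdef]
    have h1 : 0 ≤ m * (γ + 1) ^ q / (2 - q) ^ 2 := by positivity
    linarith
  have hc2q : 0 < c * (2 - q) := mul_pos hc h2q
  obtain ⟨K, hK⟩ : ∃ K : ℝ, K = m * (c * (2 - q)) ^ (q / (2 - q)) * (γ + c * (2 - q)) ^ q :=
    ⟨_, rfl⟩
  have hK0 : 0 < K := hK ▸
    mul_pos (mul_pos hm (Real.rpow_pos_of_pos hc2q _))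
      (Real.rpow_pos_of_pos (by linarith) q)
  obtain ⟨M, hM⟩ : ∃ M : ℝ, M = 1 + (1 / b) * max 0 (Real.log (K / a)) := ⟨_, rfl⟩
  have hM0 : 0 < M := by
    rw [hM]
    have h1 : 0 ≤ (1 / b) * max 0 (Real.log (K / a)) :=
      mul_nonneg (by positivity) (le_max_left 0 _)
    linarith
  refine ⟨c, hc, M, hM0, ?_⟩
  intro ψ hψ x hx hx1
  obtain ⟨hlap, hgrad⟩ := key q γ c M hq1 hq2 hγ hc ψ hψ x hx
  obtain ⟨r, hr⟩ : ∃ r : ℝ, r = ‖x‖ := ⟨_, rfl⟩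
  rw [← hr] at hlap hgrad hx hx1
  rw [hlap, hgrad, hψ x, ← hr]
  obtain ⟨t, ht⟩ : ∃ t : ℝ, t = r ^ (2 - q) := ⟨_, rfl⟩
  rw [← ht]
  have ht0 : 0 < t := ht ▸ Real.rpow_pos_of_pos hx _
  have ht1 : t < 1 := ht ▸ Real.rpow_lt_one hx.le hx1 (by linarith)
  have hrq : (0:ℝ) < r ^ (-q) := Real.rpow_pos_of_pos hx _
  have hB0 : (0:ℝ) < γ + c * (2 - q) * t := by nlinarith [mul_pos hc2q ht0]
  have hGq : (γ / r + c * (2 - q) * r ^ (1 - q)) ^ q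
      = r ^ (-q) * (γ + c * (2 - q) * t) ^ q := by
    have h1 : r ^ (1 - q) = r⁻¹ * t := by
      rw [ht, show (1 - q : ℝ) = -1 + (2 - q) by ring, Real.rpow_add hx, Real.rpow_neg_one]
    have hfac : γ / r + c * (2 - q) * r ^ (1 - q) = r⁻¹ * (γ + c * (2 - q) * t) := by
      rw [h1]; ring
    rw [hfac, Real.mul_rpow (inv_nonneg.mpr hx.le) hB0.le]
    congr 1
    rw [← Real.rpow_neg_one r, ← Real.rpow_mul hx.le]
    norm_num
  have hexp0 : 0 < a * Real.exp (b * (γ * Real.log (1 / r) + c * (1 - t) + M)) := by positivity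
  by_cases hcase : c * (2 - q) * t ≤ 1
  · -- small r : the Laplacian term dominates
    have hcc : c * (2 - q) ^ 2 = m * (γ + 1) ^ q + (2 - q) ^ 2 := by
      rw [hcdef]
      field_simp
    have hBq0 : (0:ℝ) ≤ (γ + c * (2 - q) * t) ^ q := (Real.rpow_pos_of_pos hB0 q).le
    have hBle : (γ + c * (2 - q) * t) ^ q ≤ (γ + 1) ^ q :=
      Real.rpow_le_rpow hB0.le (by linarith) (by linarith)
    have hmain : m * ((γ / r + c * (2 - q) * r ^ (1 - q)) ^ q)
        ≤ c * (2 - q) ^ 2 * r ^ (-q) := by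
      rw [hGq]
      have h1 : m * ((γ + c * (2 - q) * t) ^ q) ≤ m * (γ + 1) ^ q :=
        mul_le_mul_of_nonneg_left hBle hm.le
      have h2 := mul_le_mul_of_nonneg_left h1 hrq.le
      have h3 : c * (2 - q) ^ 2 * r ^ (-q)
          = m * (γ + 1) ^ q * r ^ (-q) + (2 - q) ^ 2 * r ^ (-q) := by
        linear_combination r ^ (-q:ℝ) * hcc
      linarith [h2, h3, mul_nonneg (sq_nonneg (2 - q)) hrq.le]
    linarith [hexp0, hmain]
  · -- large r : the exponential term dominates
    push_neg at hcase
    have hApos : (0:ℝ) ≤ c * (2 - q) ^ 2 * r ^ (-q) := by positivity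
    have htinv : t⁻¹ ≤ c * (2 - q) := by
      have h1 := (div_lt_iff₀ ht0).mpr (by linarith : (1:ℝ) < c * (2 - q) * t)
      rw [one_div] at h1
      exact h1.le
    have hrqle : r ^ (-q:ℝ) ≤ (c * (2 - q)) ^ (q / (2 - q)) := by
      have e4 : r ^ (-q:ℝ) = (t⁻¹) ^ (q / (2 - q)) := by
        rw [ht, ← Real.rpow_neg hx.le, ← Real.rpow_mul hx.le]
        congr 1
        field_simp
      rw [e4]
      exact Real.rpow_le_rpow (inv_nonneg.mpr ht0.le) htinv
        (div_nonneg (by linarith) h2q.le)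
    have hBle : (γ + c * (2 - q) * t) ^ q ≤ (γ + c * (2 - q)) ^ q := by
      apply Real.rpow_le_rpow hB0.le _ (by linarith)
      nlinarith [hc2q, ht1]
    have hmG : m * ((γ / r + c * (2 - q) * r ^ (1 - q)) ^ q) ≤ K := by
      rw [hGq, hK]
      have h1 : r ^ (-q:ℝ) * (γ + c * (2 - q) * t) ^ q
          ≤ (c * (2 - q)) ^ (q / (2 - q)) * (γ + c * (2 - q)) ^ q :=
        mul_le_mul hrqle hBle (Real.rpow_pos_of_pos hB0 q).le
          (Real.rpow_pos_of_pos hc2q _).le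
      have h2 := mul_le_mul_of_nonneg_left h1 hm.le
      linarith [h2]
    have hexpK : K ≤ a * Real.exp (b * (γ * Real.log (1 / r) + c * (1 - t) + M)) := by
      have hL : 0 ≤ Real.log (1 / r) := Real.log_nonneg (one_le_one_div hx hx1.le)
      have harg : b * M ≤ b * (γ * Real.log (1 / r) + c * (1 - t) + M) := by
        have h1 : 0 ≤ γ * Real.log (1 / r) + c * (1 - t) := by
          have := mul_nonneg hγ.le hL
          have := mul_nonneg hc.le (by linarith : (0:ℝ) ≤ 1 - t)
          linarith
        have h2 := mul_le_mul_of_nonneg_left (by linarith : M ≤ γ * Real.log (1 / r) + c * (1 - t) + M) hb.le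
        linarith [h2]
      have hbM : b * M = b + max 0 (Real.log (K / a)) := by
        rw [hM]
        field_simp
      have h2 : Real.log (K / a) ≤ b * M := by
        rw [hbM]
        have := le_max_right 0 (Real.log (K / a))
        linarith
      calc K = a * (K / a) := by field_simp
        _ = a * Real.exp (Real.log (K / a)) := by rw [Real.exp_log (by positivity)]
        _ ≤ a * Real.exp (b * M) :=
            mul_le_mul_of_nonneg_left (Real.exp_le_exp.mpr h2) ha.le
        _ ≤ _ := mul_le_mul_of_nonneg_left (Real.exp_le_exp.mpr harg) ha.le
    linarith
end

section
/- Let β ∈ (0,1) and X : (-∞, 0] → [0,∞) be a bounded C² function satisfying -X''(t) + X(t) ≤ L e^{βt} for all t ≤ 0, for some L ≥ 0. Then there exists C > 0 such that X(t) ≤ C e^{βt} for all t ≤ 0. -/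
open Real

/-- If `0 < β < 1` and `X ≥ 0` is bounded, `C²` on `(-∞,0]` with `-X'' + X ≤ L e^{βt}`,
then `X(t) ≤ C e^{βt}` for some `C > 0`. -/
theorem stmt13 (β L : ℝ) (hβ : 0 < β) (hβ1 : β < 1) (hL : 0 ≤ L) (X : ℝ → ℝ)
    (hX : ContDiffOn ℝ 2 X (Set.Iic 0))
    (hXnn : ∀ t ≤ (0 : ℝ), 0 ≤ X t)
    (hbdd : ∃ M, ∀ t ≤ (0 : ℝ), X t ≤ M)
    (hineq : ∀ t ≤ (0 : ℝ), -(deriv (deriv X) t) + X t ≤ L * Real.exp (β * t)) :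
    ∃ C > 0, ∀ t ≤ (0 : ℝ), X t ≤ C * Real.exp (β * t) := by
  classical
  obtain ⟨M0, hM0⟩ := hbdd
  set M : ℝ := max M0 0 with hMdef
  have hM : ∀ t ≤ (0:ℝ), X t ≤ M := fun t ht => (hM0 t ht).trans (le_max_left _ _)
  have hMnn : 0 ≤ M := le_max_right _ _
  have hβ2 : 0 < 1 - β ^ 2 := by nlinarith
  have hX0 : 0 ≤ X 0 := hXnn 0 le_rfl
  set C : ℝ := L / (1 - β ^ 2) + X 0 + 1 with hCdef
  have hLquot : 0 ≤ L / (1 - β ^ 2) := div_nonneg hL hβ2.le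
  have hCpos : 0 < C := by positivity
  have hCL : L ≤ C * (1 - β ^ 2) := by
    have h1 : C * (1 - β ^ 2) = L + (X 0 + 1) * (1 - β ^ 2) := by
      rw [hCdef, add_mul, add_mul, div_mul_cancel₀ _ hβ2.ne']; ring
    nlinarith [mul_nonneg (by linarith : (0:ℝ) ≤ X 0 + 1) hβ2.le]
  have hCX0 : X 0 ≤ C := by simp only [hCdef]; linarith
  -- differentiability facts on the open half line
  have hXat : ∀ s : ℝ, s < 0 → ContDiffAt ℝ 2 X s := fun s hs =>
    hX.contDiffAt (Iic_mem_nhds hs)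
  have hXon : ContDiffOn ℝ 2 X (Set.Iio 0) := hX.mono Set.Iio_subset_Iic_self
  have hXon' : DifferentiableOn ℝ X (Set.Iio 0) ∧
      ContDiffOn ℝ 1 (deriv X) (Set.Iio 0) := by
    have hXon1 : ContDiffOn ℝ ((1:WithTop ℕ∞) + 1) X (Set.Iio 0) := by
      convert hXon using 2
      exact one_add_one_eq_two
    obtain ⟨a, _, c⟩ := (contDiffOn_succ_iff_deriv_of_isOpen isOpen_Iio).1 hXon1
    exact ⟨a, c⟩
  have hXd : ∀ s : ℝ, s < 0 → DifferentiableAt ℝ X s := fun s hs =>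
    (hXon'.1.differentiableAt (Iio_mem_nhds hs))
  have hXd2 : ∀ s : ℝ, s < 0 → DifferentiableAt ℝ (deriv X) s := fun s hs =>
    ((hXon'.2.differentiableOn one_ne_zero).differentiableAt (Iio_mem_nhds hs))
  -- the main claim with the barrier
  have main : ∀ ε > 0, ∀ s ≤ (0:ℝ),
      X s - C * Real.exp (β * s) - ε * Real.exp (-s) ≤ 0 := by
    intro ε hε
    by_contra hcon
    push_neg at hcon
    obtain ⟨s0, hs0le, hgs0⟩ := hcon
    set g : ℝ → ℝ := fun s => X s - C * Real.exp (β * s) - ε * Real.exp (-s) with hgdef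
    -- derivative formulas for g
    have hdg : ∀ s : ℝ, s < 0 → HasDerivAt g
        (deriv X s - C * (β * Real.exp (β * s)) + ε * Real.exp (-s)) s := by
      intro s hs
      have h1 : HasDerivAt X (deriv X s) s := (hXd s hs).hasDerivAt
      have h2 : HasDerivAt (fun u : ℝ => Real.exp (β * u)) (β * Real.exp (β * s)) s := by
        have := (Real.hasDerivAt_exp (β * s)).comp s ((hasDerivAt_id s).const_mul β)
        simpa [mul_comm, Function.comp_def] using this
      have h3 : HasDerivAt (fun u : ℝ => Real.exp (-u)) (-Real.exp (-s)) s := by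
        have := (Real.hasDerivAt_exp (-s)).comp s (hasDerivAt_neg s)
        simpa [Function.comp_def] using this
      have := (h1.sub (h2.const_mul C)).sub (h3.const_mul ε)
      refine this.congr_deriv ?_
      ring
    have hderivg : ∀ s : ℝ, s < 0 → deriv g s
        = deriv X s - C * (β * Real.exp (β * s)) + ε * Real.exp (-s) := fun s hs =>
      (hdg s hs).deriv
    have hdg2 : ∀ s : ℝ, s < 0 → HasDerivAt (deriv g)
        (deriv (deriv X) s - C * (β ^ 2 * Real.exp (β * s)) - ε * Real.exp (-s)) s := by
      intro s hs
      have h1 : HasDerivAt (deriv X) (deriv (deriv X) s) s := (hXd2 s hs).hasDerivAt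
      have h2 : HasDerivAt (fun u : ℝ => Real.exp (β * u)) (β * Real.exp (β * s)) s := by
        have := (Real.hasDerivAt_exp (β * s)).comp s ((hasDerivAt_id s).const_mul β)
        simpa [mul_comm, Function.comp_def] using this
      have h3 : HasDerivAt (fun u : ℝ => Real.exp (-u)) (-Real.exp (-s)) s := by
        have := (Real.hasDerivAt_exp (-s)).comp s (hasDerivAt_neg s)
        simpa [Function.comp_def] using this
      have hF : HasDerivAt (fun u => deriv X u - C * (β * Real.exp (β * u)) + ε * Real.exp (-u))
          (deriv (deriv X) s - C * (β ^ 2 * Real.exp (β * s)) - ε * Real.exp (-s)) s := by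
        have := (h1.sub ((h2.const_mul β).const_mul C)).add (h3.const_mul ε)
        refine this.congr_deriv ?_
        ring
      have heq : deriv g =ᶠ[nhds s]
          fun u => deriv X u - C * (β * Real.exp (β * u)) + ε * Real.exp (-u) := by
        filter_upwards [Iio_mem_nhds hs] with u hu
        exact hderivg u hu
      exact hF.congr_of_eventuallyEq heq
    have hderivg2 : ∀ s : ℝ, s < 0 → deriv (deriv g) s
        = deriv (deriv X) s - C * (β ^ 2 * Real.exp (β * s)) - ε * Real.exp (-s) := fun s hs =>
      (hdg2 s hs).deriv
    -- key differential inequality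
    have hkey : ∀ s : ℝ, s < 0 → g s ≤ deriv (deriv g) s := by
      intro s hs
      have h1 := hineq s hs.le
      have h2 : 0 < Real.exp (β * s) := Real.exp_pos _
      rw [hderivg2 s hs]
      simp only [hgdef]
      nlinarith [Real.exp_pos (-s)]
    -- continuity of g on Iic 0
    have hgc : ContinuousOn g (Set.Iic 0) := by
      apply ContinuousOn.sub
      apply ContinuousOn.sub hX.continuousOn
      · exact (continuous_const.mul (Real.continuous_exp.comp
          (continuous_const.mul continuous_id))).continuousOn
      · exact (continuous_const.mul (Real.continuous_exp.comp
          continuous_neg)).continuousOn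
    have hg0 : g 0 < 0 := by
      simp only [hgdef]
      simp only [mul_zero, Real.exp_zero, neg_zero, mul_one]
      linarith
    have hgs0' : 0 < g s0 := hgs0
    have hs0neg : s0 < 0 := by
      rcases lt_or_eq_of_le hs0le with h | h
      · exact h
      · exfalso; rw [h] at hgs0'; linarith
    -- choose T far to the left
    set T : ℝ := min (s0 - 1) (-(M / ε + 1)) with hTdef
    have hTs0 : T < s0 := lt_of_le_of_lt (min_le_left _ _) (by linarith)
    have hTneg : T < 0 := lt_trans hTs0 hs0neg
    have hgT : g T < 0 := by
      have h1 : X T ≤ M := hM T hTneg.le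
      have h2 : M / ε + 1 ≤ -T := by
        have := min_le_right (s0 - 1) (-(M / ε + 1))
        linarith
      have h3 : -T + 1 ≤ Real.exp (-T) := Real.add_one_le_exp (-T)
      have h4 : M < ε * Real.exp (-T) := by
        have h5 : M / ε + 2 ≤ Real.exp (-T) := by linarith
        have h6 : ε * (M / ε + 2) ≤ ε * Real.exp (-T) :=
          mul_le_mul_of_nonneg_left h5 hε.le
        have h7 : ε * (M / ε + 2) = M + 2 * ε := by
          field_simp
        linarith
      have h8 : 0 < C * Real.exp (β * T) := by positivity
      simp only [hgdef]
      linarith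
    -- maximum on [T, 0]
    have hs0mem : s0 ∈ Set.Icc T 0 := ⟨hTs0.le, hs0le⟩
    obtain ⟨t0, ht0mem, ht0max⟩ := isCompact_Icc.exists_isMaxOn ⟨s0, hs0mem⟩
      (hgc.mono (fun x hx => hx.2))
    have hgt0 : 0 < g t0 := lt_of_lt_of_le hgs0' (ht0max hs0mem)
    have ht0T : T < t0 := by
      rcases lt_or_eq_of_le ht0mem.1 with h | h
      · exact h
      · exfalso; rw [← h] at hgt0; linarith
    have ht0neg : t0 < 0 := by
      rcases lt_or_eq_of_le ht0mem.2 with h | h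
      · exact h
      · exfalso; rw [h] at hgt0; linarith
    -- derivative vanishes at t0
    have hlocmax : IsLocalMax g t0 := ht0max.isLocalMax (Icc_mem_nhds ht0T ht0neg)
    have hderiv0 : deriv g t0 = 0 := hlocmax.deriv_eq_zero
    -- find δ with g ≥ g t0 / 2 on [t0, t0 + δ] ⊆ Iio 0
    have hgcont : ContinuousAt g t0 :=
      (hgc.continuousWithinAt (Set.mem_Iic.2 ht0neg.le)).continuousAt
        (Iic_mem_nhds ht0neg)
    have hset : {u : ℝ | g t0 / 2 < g u} ∩ Set.Iio 0 ∈ nhds t0 := by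
      apply Filter.inter_mem
      · exact hgcont.preimage_mem_nhds (Ioi_mem_nhds (half_lt_self hgt0))
      · exact Iio_mem_nhds ht0neg
    obtain ⟨δ, hδpos, hball⟩ := Metric.mem_nhds_iff.1 hset
    set δ' : ℝ := δ / 2 with hδ'def
    have hδ'pos : 0 < δ' := by positivity
    have hsub : Set.Icc t0 (t0 + δ') ⊆ {u : ℝ | g t0 / 2 < g u} ∩ Set.Iio 0 := by
      intro u hu
      apply hball
      rw [Metric.mem_ball, Real.dist_eq, abs_sub_lt_iff]
      constructor <;> [skip; skip] <;>
        · have := hu.1; have := hu.2; simp only [hδ'def] at *; linarith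
    -- on (t0, t0+δ'), deriv g is positive
    have hIccIio : Set.Icc t0 (t0 + δ') ⊆ Set.Iio 0 := fun u hu => (hsub hu).2
    have hgpos : ∀ u ∈ Set.Icc t0 (t0 + δ'), g t0 / 2 < g u := fun u hu => (hsub hu).1
    -- deriv g continuous on the interval; auxiliary function h u = deriv g u - (g t0/2) * u
    set c : ℝ := g t0 / 2 with hcdef
    have hcpos : 0 < c := by positivity
    have hmono : MonotoneOn (fun u => deriv g u - c * u) (Set.Icc t0 (t0 + δ')) := by
      apply monotoneOn_of_deriv_nonneg (convex_Icc _ _)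
      · apply ContinuousOn.sub
        · intro u hu
          exact ((hdg2 u (hIccIio hu)).differentiableAt.continuousAt).continuousWithinAt
        · exact (continuous_const.mul continuous_id).continuousOn
      · intro u hu
        rw [interior_Icc] at hu
        have hu' : u ∈ Set.Icc t0 (t0 + δ') := Set.Ioo_subset_Icc_self hu
        exact ((hdg2 u (hIccIio hu')).differentiableAt.sub
          ((differentiableAt_id.const_mul c))).differentiableWithinAt
      · intro u hu
        rw [interior_Icc] at hu
        have hu' : u ∈ Set.Icc t0 (t0 + δ') := Set.Ioo_subset_Icc_self hu
        have huneg : u < 0 := hIccIio hu'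
        have hD : HasDerivAt (fun u => deriv g u - c * u)
            (deriv (deriv g) u - c) u := by
          rw [hderivg2 u huneg]
          simpa [Pi.sub_def] using (hdg2 u huneg).sub ((hasDerivAt_id u).const_mul c)
        rw [hD.deriv]
        have h1 : c < g u := hgpos u hu'
        have h2 : g u ≤ deriv (deriv g) u := hkey u huneg
        linarith
    -- deriv g is positive on (t0, t0+δ']
    have hdgpos : ∀ u ∈ Set.Ioc t0 (t0 + δ'), 0 < deriv g u := by
      intro u hu
      have h1 := hmono (Set.left_mem_Icc.2 (by linarith [hδ'pos]))
        (Set.mem_Icc.2 ⟨hu.1.le, hu.2⟩) hu.1.le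
      simp only [hderiv0] at h1
      have : c * (u - t0) ≤ deriv g u := by linarith [h1]
      nlinarith [hu.1, hcpos]
    -- hence g is strictly increasing on [t0, t0+δ'], contradiction with max
    have hstrict : StrictMonoOn g (Set.Icc t0 (t0 + δ')) := by
      apply strictMonoOn_of_deriv_pos (convex_Icc _ _)
      · exact hgc.mono (fun u hu => Set.mem_Iic.2 (le_of_lt (hIccIio hu)))
      · intro u hu
        rw [interior_Icc] at hu
        exact hdgpos u ⟨hu.1, hu.2.le⟩
    have hlt : g t0 < g (t0 + δ') :=
      hstrict (Set.left_mem_Icc.2 (by linarith)) (Set.right_mem_Icc.2 (by linarith))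
        (by linarith)
    have hmem : t0 + δ' ∈ Set.Icc T 0 := by
      have : t0 + δ' < 0 := hIccIio (Set.right_mem_Icc.2 (by linarith))
      exact ⟨by linarith, this.le⟩
    have := ht0max hmem
    simp only [Set.mem_setOf_eq] at this
    linarith
  -- conclude
  refine ⟨C, hCpos, fun t ht => ?_⟩
  apply le_of_forall_pos_le_add
  intro δ hδ
  have hε : 0 < δ * Real.exp t := by positivity
  have h := main (δ * Real.exp t) hε t ht
  have hexp : Real.exp t * Real.exp (-t) = 1 := by
    rw [← Real.exp_add]; simp
  nlinarith [h, hexp]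
end

section
/- Let u be a C² radial function on the punctured disk, with w(t) = u(e^t) for t ≤ 0 satisfying -w'' + a e^{bw+2t} - m e^{(2-q)t}|w'|^q = 0, where q > 2, m, a, b > 0. Suppose there exist constants K, K' such that -(2/b)t - K ln(1-t) - K' ≤ w(t) ≤ -(q/b)t + K' for all t ≤ 0, and that w' is monotone near -∞. Then w'(t) → -q/b as t → -∞, and consequently w(t)/(-t) → q/b. -/
open Real Filter Topology

lemma aux_littleO : (fun t : ℝ => Real.log (1 - t)) =o[atBot] (fun t : ℝ => t) := by
  have h1 : Tendsto (fun t : ℝ => 1 - t) atBot atTop := by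
    have := tendsto_neg_atBot_atTop (G := ℝ)
    simpa [sub_eq_add_neg] using (tendsto_atTop_add_const_left atBot (1:ℝ) this)
  have h2 : (fun t : ℝ => Real.log (1 - t)) =o[atBot] (fun t : ℝ => 1 - t) :=
    Real.isLittleO_log_id_atTop.comp_tendsto h1
  refine h2.trans_isBigO ?_
  refine Asymptotics.isBigO_iff.2 ⟨2, ?_⟩
  filter_upwards [eventually_le_atBot (-1 : ℝ)] with t ht
  have h3 : (0:ℝ) ≤ 1 - t := by linarith
  have h4 : |1 - t| = 1 - t := abs_of_nonneg h3
  have h5 : |t| = -t := abs_of_nonpos (by linarith)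
  simp only [Real.norm_eq_abs, h4, h5]
  linarith

lemma aux_log_div_tendsto : Tendsto (fun t : ℝ => Real.log (1 - t) / t) atBot (𝓝 0) :=
  aux_littleO.tendsto_div_nhds_zero

lemma aux_log_lt (c K C t₁ : ℝ) (hc : 0 < c) : ∃ t ≤ t₁, K * Real.log (1 - t) + C < c * (-t) := by
  have h1 : (fun t : ℝ => K * Real.log (1 - t)) =o[atBot] (fun t : ℝ => t) :=
    aux_littleO.const_mul_left K
  have h2 := (Asymptotics.isLittleO_iff.1 h1) (show (0:ℝ) < c/2 by positivity)
  rw [eventually_atBot] at h2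
  obtain ⟨b, hb⟩ := h2
  refine ⟨min t₁ (min b (-(2*(|C|+1)/c))), min_le_left _ _, ?_⟩
  set t := min t₁ (min b (-(2*(|C|+1)/c))) with htdef
  have htb : t ≤ b := le_trans (min_le_right _ _) (min_le_left _ _)
  have htc : t ≤ -(2*(|C|+1)/c) := le_trans (min_le_right _ _) (min_le_right _ _)
  have ht0 : t ≤ 0 := by
    refine htc.trans ?_
    have : 0 ≤ 2*(|C|+1)/c := by positivity
    linarith
  have h3 := hb t htb
  simp only [Real.norm_eq_abs] at h3
  have h4 : K * Real.log (1 - t) ≤ (c/2) * (-t) := by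
    calc K * Real.log (1 - t) ≤ |K * Real.log (1 - t)| := le_abs_self _
    _ ≤ c/2 * |t| := h3
    _ = (c/2) * (-t) := by rw [abs_of_nonpos ht0]
  have h5 : 2*(|C|+1)/c ≤ -t := by linarith
  have h6 : 2*(|C|+1) ≤ c * (-t) := by
    rw [div_le_iff₀ hc] at h5; linarith [mul_comm (-t) c]
  have h7 : C ≤ |C| := le_abs_self C
  nlinarith

/-- Let `q > 2` and `w(t) = u(e^t)` satisfy
`-w'' + a e^{bw+2t} - m e^{(2-q)t}|w'|^q = 0` on `(-∞,0]`, with two-sided bounds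
`-(2/b)t - K ln(1-t) - K' ≤ w(t) ≤ -(q/b)t + K'` and `w'` monotone near `-∞`. Then
`w'(t) → -q/b` and `w(t)/(-t) → q/b` as `t → -∞`. -/
theorem stmt15 (m a b q K K' : ℝ) (hm : 0 < m) (ha : 0 < a) (hb : 0 < b) (hq : 2 < q)
    (w : ℝ → ℝ) (hw : ContDiffOn ℝ 2 w (Set.Iic 0))
    (heq : ∀ t ≤ (0 : ℝ),
      -(deriv (deriv w) t) + a * Real.exp (b * w t + 2 * t) -
        m * Real.exp ((2 - q) * t) * |deriv w t| ^ q = 0)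
    (hlow : ∀ t ≤ (0 : ℝ), -(2 / b) * t - K * Real.log (1 - t) - K' ≤ w t)
    (hup : ∀ t ≤ (0 : ℝ), w t ≤ -(q / b) * t + K')
    (hmono : ∃ T ≤ (0 : ℝ),
      MonotoneOn (deriv w) (Set.Iic T) ∨ AntitoneOn (deriv w) (Set.Iic T)) :
    Tendsto (deriv w) atBot (nhds (-(q / b))) ∧
    Tendsto (fun t => w t / (-t)) atBot (nhds (q / b)) := by
  obtain ⟨T, hT0, hcase⟩ := hmono
  set T₁ : ℝ := min T (-1) with hT₁def
  have hT₁T : T₁ ≤ T := min_le_left _ _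
  have hT₁1 : T₁ ≤ -1 := min_le_right _ _
  have hT₁0 : T₁ < 0 := lt_of_le_of_lt hT₁1 (by norm_num)
  -- smoothness facts
  have hdw : ∀ t : ℝ, t < 0 → HasDerivAt w (deriv w t) t := by
    intro t ht
    exact ((hw.contDiffAt (Iic_mem_nhds ht)).differentiableAt (by norm_num)).hasDerivAt
  have hw' : ContDiffOn ℝ 1 (deriv w) (Set.Iio 0) :=
    (hw.mono Set.Iio_subset_Iic_self).deriv_of_isOpen isOpen_Iio (by norm_num)
  have hdw2 : ∀ t : ℝ, t < 0 → HasDerivAt (deriv w) (deriv (deriv w) t) t := by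
    intro t ht
    exact ((hw'.contDiffAt (isOpen_Iio.mem_nhds ht)).differentiableAt (by norm_num)).hasDerivAt
  have hcw : ContinuousOn w (Set.Iic 0) := hw.continuousOn
  have hcw' : ContinuousOn (deriv w) (Set.Iio 0) := hw'.continuousOn
  -- mean value theorem helper
  have mvt : ∀ s t : ℝ, s < t → t < 0 →
      ∃ c ∈ Set.Ioo s t, deriv w c = (w t - w s) / (t - s) := by
    intro s t hst ht
    refine exists_hasDerivAt_eq_slope w (deriv w) hst
      (hcw.mono fun x hx => le_trans hx.2 ht.le) (fun x hx => hdw x (lt_trans hx.2 ht))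
  -- key growth lemmas
  have keyA : ∀ t₀ : ℝ, t₀ ≤ T₁ → ∀ M : ℝ, q / b < M →
      ¬(∀ s : ℝ, s ≤ t₀ → deriv w s ≤ -M) := by
    intro t₀ ht₀ M hM hcon
    have ht₀0 : t₀ < 0 := lt_of_le_of_lt ht₀ hT₁0
    have hd : 0 < M - q / b := by linarith
    set C₀ : ℝ := K' - w t₀ - M * t₀ with hC₀
    set t : ℝ := min (t₀ - 1) (-((|C₀| + 1) / (M - q / b))) with htdef
    have htlt : t < t₀ := lt_of_le_of_lt (min_le_left _ _) (by linarith)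
    obtain ⟨c, hc, hcval⟩ := mvt t t₀ htlt ht₀0
    have hsub : (0:ℝ) < t₀ - t := by linarith
    have hslope : w t₀ - w t = deriv w c * (t₀ - t) := by
      rw [hcval, div_mul_cancel₀ _ (ne_of_gt hsub)]
    have hder : deriv w c ≤ -M := hcon c hc.2.le
    have h2 : w t₀ - w t ≤ -M * (t₀ - t) := by nlinarith
    have h3 := hup t (by linarith : t ≤ (0:ℝ))
    have h5 : (|C₀| + 1) / (M - q / b) ≤ -t := by
      have := min_le_right (t₀ - 1) (-((|C₀| + 1) / (M - q / b)))
      linarith [this]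
    have h6 : |C₀| + 1 ≤ (M - q / b) * (-t) := by
      rw [div_le_iff₀ hd] at h5; linarith [mul_comm (-t) (M - q/b)]
    have h7 : C₀ ≤ |C₀| := le_abs_self C₀
    nlinarith
  have keyB : ∀ t₀ : ℝ, t₀ ≤ T₁ → ∀ M : ℝ, 0 < M + 2 / b →
      ¬(∀ s : ℝ, s ≤ t₀ → M ≤ deriv w s) := by
    intro t₀ ht₀ M hM hcon
    have ht₀0 : t₀ < 0 := lt_of_le_of_lt ht₀ hT₁0
    obtain ⟨t, ht1, ht2⟩ := aux_log_lt (M + 2 / b) K (w t₀ - M * t₀ + K') (t₀ - 1) hM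
    have htlt : t < t₀ := by linarith
    obtain ⟨c, hc, hcval⟩ := mvt t t₀ htlt ht₀0
    have hsub : (0:ℝ) < t₀ - t := by linarith
    have hslope : w t₀ - w t = deriv w c * (t₀ - t) := by
      rw [hcval, div_mul_cancel₀ _ (ne_of_gt hsub)]
    have hder : M ≤ deriv w c := hcon c hc.2.le
    have h2 : M * (t₀ - t) ≤ w t₀ - w t := by nlinarith
    have h3 := hlow t (by linarith : t ≤ (0:ℝ))
    nlinarith
  -- existence of limit L of deriv w at atBot
  obtain ⟨L, hL⟩ : ∃ L : ℝ, Tendsto (deriv w) atBot (𝓝 L) := by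
    have hmemT : ∀ t : ℝ, min t T₁ ∈ Set.Iic T := fun t =>
      le_trans (min_le_right _ _) hT₁T
    have hfeq : (fun t : ℝ => deriv w (min t T₁)) =ᶠ[atBot] deriv w := by
      filter_upwards [eventually_le_atBot T₁] with t ht
      simp [min_eq_left ht]
    rcases hcase with hM | hA
    · have hvmono : Monotone (fun t : ℝ => deriv w (min t T₁)) := fun t s hts =>
        hM (hmemT t) (hmemT s) (min_le_min hts le_rfl)
      have hbdd : BddBelow (Set.range fun t : ℝ => deriv w (min t T₁)) := by
        refine ⟨-(q / b + 1), ?_⟩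
        rintro x ⟨t, rfl⟩
        by_contra h
        push_neg at h
        refine keyA (min t T₁) (min_le_right _ _) (q / b + 1) (lt_add_one _) ?_
        intro s hs
        have hsT : s ∈ Set.Iic T := Set.mem_Iic.2 (hs.trans (hmemT t))
        exact le_trans (hM hsT (hmemT t) hs) h.le
      exact ⟨_, (tendsto_atBot_ciInf hvmono hbdd).congr' hfeq⟩
    · have hvanti : Antitone (fun t : ℝ => deriv w (min t T₁)) := fun t s hts =>
        hA (hmemT t) (hmemT s) (min_le_min hts le_rfl)
      have hbdd : BddAbove (Set.range fun t : ℝ => deriv w (min t T₁)) := by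
        refine ⟨1, ?_⟩
        rintro x ⟨t, rfl⟩
        by_contra h
        push_neg at h
        refine keyB (min t T₁) (min_le_right _ _) 1 (by positivity) ?_
        intro s hs
        have hsT : s ∈ Set.Iic T := Set.mem_Iic.2 (hs.trans (hmemT t))
        exact le_trans h.le (hA hsT (hmemT t) hs)
      exact ⟨_, (tendsto_atBot_ciSup hvanti hbdd).congr' hfeq⟩
  -- w t / t → L
  have hWT : Tendsto (fun t => w t / t) atBot (𝓝 L) := by
    rw [Metric.tendsto_nhds]
    intro ε hε
    have h1 := Metric.tendsto_nhds.mp hL (ε / 4) (by positivity)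
    rw [eventually_atBot] at h1
    obtain ⟨b₀, hb₀⟩ := h1
    set T₂ : ℝ := min b₀ T₁ with hT₂def
    have hT₂0 : T₂ < 0 := lt_of_le_of_lt (min_le_right _ _) hT₁0
    have hT₂b : ∀ s : ℝ, s ≤ T₂ → |deriv w s - L| < ε / 4 := by
      intro s hs
      have := hb₀ s (hs.trans (min_le_left _ _))
      rwa [Real.dist_eq] at this
    set C₂ : ℝ := |w T₂ - L * T₂| with hC₂def
    have hC₂0 : 0 ≤ C₂ := abs_nonneg _
    rw [eventually_atBot]
    refine ⟨min (T₂ - 1) (-(4 * (C₂ + 1) / ε)), fun t ht => ?_⟩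
    have ht1 : t ≤ T₂ - 1 := le_trans ht (min_le_left _ _)
    have ht2 : t ≤ -(4 * (C₂ + 1) / ε) := le_trans ht (min_le_right _ _)
    have htT₂ : t < T₂ := by linarith
    have ht0 : t < 0 := by linarith
    obtain ⟨c, hc, hcval⟩ := mvt t T₂ htT₂ hT₂0
    have hsub : (0:ℝ) < T₂ - t := by linarith
    have hslope : w T₂ - w t = deriv w c * (T₂ - t) := by
      rw [hcval, div_mul_cancel₀ _ (ne_of_gt hsub)]
    have hcd : |deriv w c - L| < ε / 4 := hT₂b c hc.2.le
    have key1 : |w T₂ - w t - L * (T₂ - t)| ≤ ε / 4 * (T₂ - t) := by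
      rw [hslope, show deriv w c * (T₂ - t) - L * (T₂ - t) = (deriv w c - L) * (T₂ - t) by ring,
        abs_mul, abs_of_pos hsub]
      exact mul_le_mul_of_nonneg_right hcd.le hsub.le
    have key2 : |w t - L * t| ≤ C₂ + ε / 4 * (T₂ - t) := by
      have : w t - L * t = (w T₂ - L * T₂) - (w T₂ - w t - L * (T₂ - t)) := by ring
      rw [this]
      exact le_trans (abs_sub _ _) (add_le_add le_rfl key1)
    have hεt : 4 * (C₂ + 1) / ε ≤ -t := by linarith
    have hεt2 : 4 * (C₂ + 1) ≤ ε * (-t) := by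
      rw [div_le_iff₀ hε] at hεt; linarith [mul_comm (-t) ε]
    have hTt : T₂ - t ≤ -t := by linarith
    have key3 : |w t - L * t| < ε * (-t) := by
      have h4 : ε / 4 * (T₂ - t) ≤ ε / 4 * (-t) := by
        apply mul_le_mul_of_nonneg_left hTt (by positivity)
      nlinarith
    rw [Real.dist_eq]
    have heq2 : w t / t - L = (w t - L * t) / t := by
      rw [sub_div, mul_div_cancel_right₀ L (ne_of_lt ht0)]
    rw [heq2, abs_div, abs_of_neg ht0, div_lt_iff₀ (by linarith : (0:ℝ) < -t)]
    linarith [key3]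
  -- bounds on L
  have hdivlow : ∀ t : ℝ, t ≤ -1 →
      w t / t ≤ -(2 / b) - K * (Real.log (1 - t) / t) - K' * (1 / t) := by
    intro t ht
    have ht0 : t < 0 := by linarith
    have h4 := hlow t (by linarith)
    rw [div_le_iff_of_neg ht0, sub_mul, sub_mul, mul_assoc, mul_assoc,
      div_mul_cancel₀ _ ht0.ne, one_div, inv_mul_cancel₀ ht0.ne, mul_one]
    exact h4
  have hdivup : ∀ t : ℝ, t ≤ -1 → -(q / b) + K' * (1 / t) ≤ w t / t := by
    intro t ht
    have ht0 : t < 0 := by linarith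
    have h4 := hup t (by linarith)
    rw [le_div_iff_of_neg ht0, add_mul, mul_assoc, one_div, inv_mul_cancel₀ ht0.ne, mul_one]
    exact h4
  have hinv : Tendsto (fun t : ℝ => 1 / t) atBot (𝓝 0) := by
    have h2 : Tendsto (fun t : ℝ => -t) atBot atTop := tendsto_neg_atBot_atTop
    have h3 := (tendsto_const_nhds (x := (1:ℝ)) (f := (atBot : Filter ℝ))).div_atTop h2
    have h5 := h3.neg
    rw [neg_zero] at h5
    refine h5.congr fun t => ?_
    rw [div_neg, neg_neg]
  have hL2 : L ≤ -(2 / b) := by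
    have hg : Tendsto (fun t : ℝ => -(2 / b) - K * (Real.log (1 - t) / t) - K' * (1 / t))
        atBot (𝓝 (-(2 / b))) := by
      have h3 := ((tendsto_const_nhds (x := -(2 / b)) (f := (atBot : Filter ℝ))).sub
        (aux_log_div_tendsto.const_mul K)).sub (hinv.const_mul K')
      simpa using h3
    refine le_of_tendsto_of_tendsto hWT hg ?_
    filter_upwards [eventually_le_atBot (-1 : ℝ)] with t ht
    exact hdivlow t ht
  have hL1 : -(q / b) ≤ L := by
    have hg : Tendsto (fun t : ℝ => -(q / b) + K' * (1 / t)) atBot (𝓝 (-(q / b))) := by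
      have h3 := (tendsto_const_nhds (x := -(q / b)) (f := (atBot : Filter ℝ))).add
        (hinv.const_mul K')
      simpa using h3
    refine le_of_tendsto_of_tendsto hg hWT ?_
    filter_upwards [eventually_le_atBot (-1 : ℝ)] with t ht
    exact hdivup t ht
  have hLneg : L < 0 := lt_of_le_of_lt hL2 (neg_lt_zero.mpr (by positivity))
  -- the sequence ξ
  have hxi : ∀ n : ℕ, ∃ c ∈ Set.Ioo (T₁ - (n + 1 : ℝ)) (T₁ - n),
      deriv (deriv w) c =
        (deriv w (T₁ - n) - deriv w (T₁ - (n + 1 : ℝ))) / ((T₁ - n) - (T₁ - (n + 1 : ℝ))) := by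
    intro n
    have h1 : T₁ - (n + 1 : ℝ) < T₁ - n := by
      have : (0:ℝ) ≤ (n:ℝ) := Nat.cast_nonneg n
      linarith
    have h2 : T₁ - (n:ℝ) ≤ T₁ := by
      have : (0:ℝ) ≤ (n:ℝ) := Nat.cast_nonneg n
      linarith
    refine exists_hasDerivAt_eq_slope (deriv w) (deriv (deriv w)) h1
      (hcw'.mono fun x hx => lt_of_le_of_lt (le_trans hx.2 h2) hT₁0)
      (fun x hx => hdw2 x (lt_of_lt_of_le hx.2 (h2.trans hT₁0.le)))
  choose ξ hξmem hξval using hxi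
  have hξlt : ∀ n : ℕ, ξ n ≤ T₁ - n := fun n => (hξmem n).2.le
  have hξ0 : ∀ n : ℕ, ξ n < 0 := by
    intro n
    have := hξlt n
    have : (0:ℝ) ≤ (n:ℝ) := Nat.cast_nonneg n
    linarith [hξlt n]
  have hξbot : Tendsto ξ atTop atBot := by
    refine tendsto_atBot_mono hξlt ?_
    have h1 : Tendsto (fun n : ℕ => -(n:ℝ)) atTop atBot :=
      tendsto_neg_atTop_atBot.comp tendsto_natCast_atTop_atTop
    simpa [sub_eq_add_neg] using tendsto_atBot_add_const_left atTop T₁ h1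
  -- equation at ξ n, after taking logs
  have hw'ξ : Tendsto (fun n => deriv w (ξ n)) atTop (𝓝 L) := hL.comp hξbot
  have hTn : Tendsto (fun n : ℕ => T₁ - (n : ℝ)) atTop atBot := by
    have h1 : Tendsto (fun n : ℕ => -(n : ℝ)) atTop atBot :=
      tendsto_neg_atTop_atBot.comp tendsto_natCast_atTop_atTop
    simpa [sub_eq_add_neg] using tendsto_atBot_add_const_left atTop T₁ h1
  have hw''ξ : Tendsto (fun n => deriv (deriv w) (ξ n)) atTop (𝓝 0) := by
    have h1 : Tendsto (fun n : ℕ => deriv w (T₁ - (n : ℝ))) atTop (𝓝 L) := hL.comp hTn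
    have h2 : Tendsto (fun n : ℕ => deriv w (T₁ - ((n : ℝ) + 1))) atTop (𝓝 L) := by
      refine hL.comp ?_
      have h3 := tendsto_atBot_add_const_right atTop (-1 : ℝ) hTn
      refine h3.congr fun n => by ring
    have h4 := h1.sub h2
    rw [sub_self] at h4
    refine h4.congr fun n => ?_
    rw [hξval n]
    have h5 : T₁ - (n:ℝ) - (T₁ - ((n:ℝ) + 1)) = 1 := by ring
    rw [h5, div_one]
  -- B n
  set B : ℕ → ℝ := fun n =>
    deriv (deriv w) (ξ n) * Real.exp (-((2 - q) * ξ n)) + m * |deriv w (ξ n)| ^ q with hBdef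
  have hBeq : ∀ n : ℕ, a * Real.exp (b * w (ξ n) + 2 * ξ n) =
      Real.exp ((2 - q) * ξ n) * B n := by
    intro n
    have h0 := heq (ξ n) (hξ0 n).le
    have hee : Real.exp ((2 - q) * ξ n) * Real.exp (-((2 - q) * ξ n)) = 1 := by
      rw [← Real.exp_add, add_neg_cancel, Real.exp_zero]
    simp only [hBdef]
    rw [mul_add, show Real.exp ((2 - q) * ξ n) * (deriv (deriv w) (ξ n) *
        Real.exp (-((2 - q) * ξ n))) = deriv (deriv w) (ξ n) *
        (Real.exp ((2 - q) * ξ n) * Real.exp (-((2 - q) * ξ n))) by ring, hee, mul_one]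
    linarith [h0]
  have hBpos : ∀ n : ℕ, 0 < B n := by
    intro n
    have h2 : Real.exp (-((2 - q) * ξ n)) * (Real.exp ((2 - q) * ξ n) * B n) = B n := by
      rw [← mul_assoc, ← Real.exp_add, neg_add_cancel, Real.exp_zero, one_mul]
    rw [← h2, ← hBeq n]
    positivity
  have hBlim : Tendsto B atTop (𝓝 (m * |L| ^ q)) := by
    have he : Tendsto (fun n => Real.exp (-((2 - q) * ξ n))) atTop (𝓝 0) := by
      have h1 : Tendsto (fun n => (q - 2) * ξ n) atTop atBot :=
        hξbot.const_mul_atBot (by linarith)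
      have h2 := Real.tendsto_exp_atBot.comp h1
      refine h2.congr fun n => ?_
      show Real.exp ((q - 2) * ξ n) = Real.exp (-((2 - q) * ξ n))
      congr 1
      ring
    have h3 : Tendsto (fun n => deriv (deriv w) (ξ n) * Real.exp (-((2 - q) * ξ n)))
        atTop (𝓝 0) := by
      have := hw''ξ.mul he
      simpa using this
    have h4 : Tendsto (fun n => |deriv w (ξ n)|) atTop (𝓝 |L|) := hw'ξ.abs
    have h5 : Tendsto (fun n => m * |deriv w (ξ n)| ^ q) atTop (𝓝 (m * |L| ^ q)) :=
      (h4.rpow_const (Or.inl (abs_ne_zero.2 hLneg.ne))).const_mul m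
    have h6 := h3.add h5
    rw [zero_add] at h6
    exact h6
  have hmLq : 0 < m * |L| ^ q := by
    have : 0 < |L| := abs_pos.2 hLneg.ne
    positivity
  -- w (ξ n) / ξ n → -q/b
  have hkey : Tendsto (fun n => w (ξ n) / ξ n) atTop (𝓝 (-(q / b))) := by
    have hlog : ∀ n : ℕ, Real.log a + (b * w (ξ n) + 2 * ξ n)
        = (2 - q) * ξ n + Real.log (B n) := by
      intro n
      have h1 := congrArg Real.log (hBeq n)
      rwa [Real.log_mul (ne_of_gt ha) (Real.exp_ne_zero _), Real.log_exp,
        Real.log_mul (Real.exp_ne_zero _) (ne_of_gt (hBpos n)), Real.log_exp] at h1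
    have hident : ∀ n : ℕ, w (ξ n) / ξ n
        = -(q / b) + (Real.log (B n) - Real.log a) / (b * ξ n) := by
      intro n
      have hξn0 : ξ n ≠ 0 := (hξ0 n).ne
      have h3 : b * w (ξ n) = -q * ξ n + (Real.log (B n) - Real.log a) := by
        linarith [hlog n]
      rw [show w (ξ n) / ξ n = b * w (ξ n) / (b * ξ n) from
        (mul_div_mul_left _ _ hb.ne').symm, h3, add_div]
      congr 1
      rw [mul_comm (-q) (ξ n), mul_comm b (ξ n), mul_div_mul_left _ _ hξn0, neg_div]
    have hlogB : Tendsto (fun n => Real.log (B n)) atTop (𝓝 (Real.log (m * |L| ^ q))) :=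
      ((Real.continuousAt_log hmLq.ne').tendsto).comp hBlim
    have hden : Tendsto (fun n => -(b * ξ n)) atTop atTop := by
      have h1 : Tendsto (fun n => b * ξ n) atTop atBot := hξbot.const_mul_atBot hb
      exact tendsto_neg_atBot_atTop.comp h1
    have hfrac : Tendsto (fun n => (Real.log (B n) - Real.log a) / (b * ξ n))
        atTop (𝓝 0) := by
      have h1 := ((hlogB.sub_const (Real.log a)).div_atTop hden).neg
      rw [neg_zero] at h1
      refine h1.congr fun n => ?_
      rw [div_neg, neg_neg]
    have h7 := (tendsto_const_nhds (x := -(q / b)) (f := (atTop : Filter ℕ))).add hfrac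
    rw [add_zero] at h7
    exact h7.congr fun n => (hident n).symm
  have hLval : L = -(q / b) :=
    tendsto_nhds_unique (hWT.comp hξbot) hkey
  constructor
  · rwa [hLval] at hL
  · have h1 : Tendsto (fun t => -(w t / t)) atBot (𝓝 (-L)) := hWT.neg
    rw [hLval, neg_neg] at h1
    have h2 : (fun t : ℝ => w t / (-t)) = fun t => -(w t / t) := by
      funext t; rw [div_neg]
    rw [h2]
    exact h1
end
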